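/- arXiv:0902.0902 — 6 statements merged into one kernel-verified Lean document; each statement's English description precedes it below -/
import Mathlib

section
/- Let Γ be a finite tree rooted at a vertex x, with every edge directed away from the root, and let F and G be two distinct directed paths in Γ whose vertex sets have nonempty intersection. Then the set of vertices common to F and G forms a connected directed path in Γ of length |F ∩ G| (where |F ∩ G| denotes the number of common vertices), this path starts at the first vertex of F or at the first vertex of G, and its first vertex is whichever of the two starting vertices of F and G has the larger level. -/
open MvPolynomial CategoryTheory

section Tree

variable {V : Type} [Fintype V] [DecidableEq V] (G : SimpleGraph V) (root : V)

/-- The level of a vertex of a rooted tree: its distance from the root, i.e. the number of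
edges on the unique path from the root. -/
noncomputable def level (v : V) : ℕ := G.dist root v

/-- Directed adjacency in a rooted tree: the edges of the tree directed away from the root. -/
def dirAdj (u v : V) : Prop := G.Adj u v ∧ G.dist root v = G.dist root u + 1

/-- A directed path in the rooted tree: a sequence of vertices in which each consecutive
pair is joined by a directed edge (away from the root). -/
def IsDirPath (p : List V) : Prop := p.Chain' (dirAdj G root)

/-- The height of the rooted tree: the maximal level of a vertex. -/
noncomputable def treeHeight : ℕ := sSup (Set.range fun v => G.dist root v)

/-- A leaf of the graph: a vertex adjacent to exactly one other vertex. -/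
def graphLeaf (v : V) : Prop := ∃! u, G.Adj v u

/-- The vertex sets of the directed paths of length `t`: the facets of the simplicial
complex `Δ_t(Γ)`. -/
def pathFacets (t : ℕ) : Set (Finset V) :=
  {S | ∃ p : List V, IsDirPath G root p ∧ p.length = t ∧ p.toFinset = S}

variable (K : Type) [Field K]

/-- The path ideal of the rooted tree restricted to directed paths all of whose vertices lie
in `S` (i.e. the path ideal of the induced subgraph on `S`). -/
noncomputable def pathIdealOn (S : Set V) (t : ℕ) : Ideal (MvPolynomial V K) :=
  Ideal.span {m | ∃ p : List V, IsDirPath G root p ∧ p.length = t ∧ (∀ v ∈ p, v ∈ S) ∧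
    m = (p.map X).prod}

/-- The path ideal `I_t(Γ)` of the rooted tree `Γ`: the ideal generated by the monomials
corresponding to directed paths of length `t`. -/
noncomputable def pathIdeal (t : ℕ) : Ideal (MvPolynomial V K) :=
  pathIdealOn G root K Set.univ t

end Tree

section Aux

variable {V : Type} [Fintype V] [DecidableEq V] {G : SimpleGraph V} {root : V}

lemma parent_unique (hG : G.IsTree) {u w v : V} (h1 : dirAdj G root u v)
    (h2 : dirAdj G root w v) : u = w := by
  obtain ⟨p, hp⟩ := hG.isConnected.exists_walk_length_eq_dist root u
  obtain ⟨q, hq⟩ := hG.isConnected.exists_walk_length_eq_dist root w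
  have hlen : (p.concat h1.1).length = G.dist root v := by
    rw [SimpleGraph.Walk.length_concat, hp, ← h1.2]
  have hlen' : (q.concat h2.1).length = G.dist root v := by
    rw [SimpleGraph.Walk.length_concat, hq, ← h2.2]
  have hp1 := (p.concat h1.1).isPath_of_length_eq_dist hlen
  have hp2 := (q.concat h2.1).isPath_of_length_eq_dist hlen'
  have huniq := hG.existsUnique_path root v
  obtain ⟨r, -, hr⟩ := huniq
  have e : p.concat h1.1 = q.concat h2.1 := (hr _ hp1).trans (hr _ hp2).symm
  have hpq : p.length = q.length := by
    have e1 := h1.2; have e2 := h2.2; rw [hp, hq]; omega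
  have g1 : (p.concat h1.1).getVert p.length = u := by
    rw [SimpleGraph.Walk.concat_eq_append, SimpleGraph.Walk.getVert_append]
    simp
  have g2 : (q.concat h2.1).getVert q.length = w := by
    rw [SimpleGraph.Walk.concat_eq_append, SimpleGraph.Walk.getVert_append]
    simp
  rw [← g1, ← g2, e, hpq]

lemma dirPath_dist {F : List V} (hF : IsDirPath G root F) (hne : F ≠ [])
    (i : ℕ) (h : i < F.length) :
    G.dist root (F.get ⟨i, h⟩) = G.dist root (F.head hne) + i := by
  induction i with
  | zero =>
    rw [List.head_eq_getElem_zero hne]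
    simp
  | succ n ih =>
    have hn : n < F.length - 1 := by omega
    have := (List.isChain_iff_getElem.mp hF) n (by omega)
    simp only [List.get_eq_getElem] at ih ⊢
    rw [this.2, ih (by omega)]
    omega

lemma dirPath_nodup {F : List V} (hF : IsDirPath G root F) : F.Nodup := by
  rw [List.nodup_iff_injective_get]
  intro i j hij
  have hne : F ≠ [] := by rintro rfl; exact absurd i.2 (by simp)
  have hi := dirPath_dist hF hne i i.2
  have hj := dirPath_dist hF hne j j.2
  simp only [Fin.eta] at hi hj
  have hd : G.dist root (F.get i) = G.dist root (F.get j) := by rw [hij]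
  ext
  omega

end Aux


section Aux2

variable {V : Type} [Fintype V] [DecidableEq V] {G : SimpleGraph V} {root : V}

lemma stepdown (hG : G.IsTree) {F Gp : List V} (hF : IsDirPath G root F)
    (hGp : IsDirPath G root Gp) (hFne : F ≠ []) (hGne : Gp ≠ [])
    (hle : G.dist root (Gp.head hGne) ≤ G.dist root (F.head hFne))
    (i : ℕ) (h : i + 1 < F.length) (hmem : F[i+1] ∈ Gp) :
    F[i]'(by omega) ∈ Gp := by
  obtain ⟨j, hjlt, hj⟩ := List.mem_iff_getElem.mp hmem
  have hFi1 : G.dist root (F[i+1]) = G.dist root (F.head hFne) + (i+1) := by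
    simpa using dirPath_dist hF hFne (i+1) h
  have hGj : G.dist root (Gp[j]) = G.dist root (Gp.head hGne) + j := by
    simpa using dirPath_dist hGp hGne j hjlt
  rw [hj, hFi1] at hGj
  have hj1 : 1 ≤ j := by omega
  have e1 : dirAdj G root (F[i]'(by omega)) (F[i+1]) := by
    have := List.isChain_iff_getElem.mp hF i (by omega)
    simpa [List.get_eq_getElem] using this
  have e2 : dirAdj G root (Gp[j-1]'(by omega)) (Gp[j]) := by
    have := List.isChain_iff_getElem.mp hGp (j-1) (by omega)
    simpa [List.get_eq_getElem, Nat.sub_add_cancel hj1] using this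
  rw [hj] at e2
  rw [parent_unique hG e1 e2]
  exact List.getElem_mem _

lemma head_mem_of_mem (hG : G.IsTree) {F Gp : List V} (hF : IsDirPath G root F)
    (hGp : IsDirPath G root Gp) (hFne : F ≠ []) (hGne : Gp ≠ [])
    (hle : G.dist root (Gp.head hGne) ≤ G.dist root (F.head hFne)) :
    ∀ (i : ℕ) (h : i < F.length), F[i] ∈ Gp → F.head hFne ∈ Gp := by
  intro i
  induction i with
  | zero => intro h hm; rw [List.head_eq_getElem_zero]; exact hm
  | succ n ih =>
    intro h hm
    exact ih (by omega) (stepdown hG hF hGp hFne hGne hle n h hm)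

lemma closed_to_zero {α : Type} (p : α → Bool) (l : List α)
    (hcl : ∀ i (h : i + 1 < l.length), p l[i+1] = true → p (l[i]'(by omega)) = true) :
    ∀ i (h : i < l.length), p l[i] = true → p (l[0]'(Nat.lt_of_le_of_lt (Nat.zero_le i) h)) = true := by
  intro i
  induction i with
  | zero => intro h hp; exact hp
  | succ n ihn => intro h hp; exact ihn (by omega) (hcl n h hp)

lemma mem_takeWhile_of_closed {α : Type} (p : α → Bool) (l : List α)
    (hcl : ∀ i (h : i + 1 < l.length), p l[i+1] = true → p (l[i]'(by omega)) = true) :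
    ∀ x ∈ l, p x = true → x ∈ l.takeWhile p := by
  induction l with
  | nil => simp
  | cons a t ih =>
    intro x hx hpx
    have hpa : p a = true := by
      rcases List.mem_cons.mp hx with rfl | hxt
      · exact hpx
      · obtain ⟨j, hj, hjx⟩ := List.mem_iff_getElem.mp hxt
        have hx2 : (a :: t)[j+1]'(by simp; omega) = x := by simpa using hjx
        have := closed_to_zero p (a :: t) hcl (j+1) (by simp; omega) (by rw [hx2]; exact hpx)
        simpa using this
    rw [List.takeWhile_cons_of_pos hpa]
    rcases List.mem_cons.mp hx with rfl | hxt
    · exact List.mem_cons_self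
    · refine List.mem_cons_of_mem _ (ih ?_ x hxt hpx)
      intro i h hp
      have := hcl (i+1) (by simp at h ⊢; omega) (by simpa using hp)
      simpa using this

lemma main_half (hG : G.IsTree) {F Gp : List V} (hF : IsDirPath G root F)
    (hGp : IsDirPath G root Gp) (hFne : F ≠ []) (hGne : Gp ≠ [])
    (hint : (F.toFinset ∩ Gp.toFinset).Nonempty)
    (hle : G.dist root (Gp.head hGne) ≤ G.dist root (F.head hFne)) :
    ∃ (q : List V) (hq : q ≠ []),
      IsDirPath G root q ∧ q.toFinset = F.toFinset ∩ Gp.toFinset ∧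
      q.length = (F.toFinset ∩ Gp.toFinset).card ∧
      q.head hq = F.head hFne := by
  set p : V → Bool := fun v => decide (v ∈ Gp) with hp
  have hclosed : ∀ i (h : i + 1 < F.length), p F[i+1] = true → p (F[i]'(by omega)) = true := by
    intro i h hpi
    simp only [hp, decide_eq_true_eq] at hpi ⊢
    exact stepdown hG hF hGp hFne hGne hle i h hpi
  -- head of F is in Gp
  have hhead : F.head hFne ∈ Gp := by
    obtain ⟨v, hv⟩ := hint
    rw [Finset.mem_inter, List.mem_toFinset, List.mem_toFinset] at hv
    obtain ⟨i, hilt, hiv⟩ := List.mem_iff_getElem.mp hv.1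
    exact head_mem_of_mem hG hF hGp hFne hGne hle i hilt (by rw [hiv]; exact hv.2)
  obtain ⟨a, t, rfl⟩ := List.exists_cons_of_ne_nil hFne
  have hpa : p a = true := by
    simp only [hp, decide_eq_true_eq]
    simpa using hhead
  have htf : ((a :: t).takeWhile p).toFinset = (a :: t).toFinset ∩ Gp.toFinset := by
    ext v
    simp only [List.mem_toFinset, Finset.mem_inter]
    constructor
    · intro hv
      exact ⟨(List.takeWhile_prefix p).subset hv,
        by simpa [hp] using List.mem_takeWhile_imp hv⟩
    · rintro ⟨hv1, hv2⟩
      exact mem_takeWhile_of_closed p _ hclosed v hv1 (by simp [hp, hv2])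
  refine ⟨(a :: t).takeWhile p, ?_, ?_, htf, ?_, ?_⟩
  · rw [List.takeWhile_cons_of_pos hpa]; simp
  · exact List.IsChain.prefix hF (List.takeWhile_prefix p)
  · rw [← htf]
    exact (List.toFinset_card_of_nodup
      ((List.takeWhile_prefix p).sublist.nodup (dirPath_nodup hF))).symm
  · rw [List.head_eq_getElem_zero, List.getElem_of_eq (List.takeWhile_cons_of_pos hpa)]
    simp

end Aux2


/-- In a finite rooted tree with edges directed away from the root, the
common vertices of two distinct directed paths `F`, `G` with nonempty intersection form a
connected directed path of length `|F ∩ G|`, which starts at the first vertex of `F` or of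
`G`; namely, at whichever of the two starting vertices has the larger level. -/
theorem path_intersection_is_path
    (V : Type) [Fintype V] [DecidableEq V] (G : SimpleGraph V) (hG : G.IsTree) (root : V)
    (F Gp : List V) (hF : IsDirPath G root F) (hGp : IsDirPath G root Gp)
    (hFne : F ≠ []) (hGne : Gp ≠ []) (hdist : F ≠ Gp)
    (hint : (F.toFinset ∩ Gp.toFinset).Nonempty) :
    ∃ (q : List V) (hq : q ≠ []),
      IsDirPath G root q ∧
      q.toFinset = F.toFinset ∩ Gp.toFinset ∧
      q.length = (F.toFinset ∩ Gp.toFinset).card ∧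
      (q.head hq = F.head hFne ∨ q.head hq = Gp.head hGne) ∧
      level G root (q.head hq) =
        max (level G root (F.head hFne)) (level G root (Gp.head hGne)) := by
  rcases le_total (G.dist root (Gp.head hGne)) (G.dist root (F.head hFne)) with h | h
  · obtain ⟨q, hq, h1, h2, h3, h4⟩ := main_half hG hF hGp hFne hGne hint h
    refine ⟨q, hq, h1, h2, h3, Or.inl h4, ?_⟩
    simp only [level, h4]
    omega
  · have hint' : (Gp.toFinset ∩ F.toFinset).Nonempty := by rwa [Finset.inter_comm]
    obtain ⟨q, hq, h1, h2, h3, h4⟩ := main_half hG hGp hF hGne hFne hint' h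
    refine ⟨q, hq, h1, by rw [h2, Finset.inter_comm], by rw [h3, Finset.inter_comm],
      Or.inr h4, ?_⟩
    simp only [level, h4]
    omega
end

section
/- Let Γ be a finite rooted tree with edges directed away from the root and let t ≥ 2. Then Δ_t(Γ) is a simplicial tree: it is connected and every nonempty subcomplex generated by a subset of its facets contains a leaf. Equivalently, for every nonempty collection {G_1,…,G_k} of vertex sets of directed paths of length t in Γ, there exists an index i and, if k ≥ 2, an index j ≠ i, such that G_i ∩ G_m ⊆ G_i ∩ G_j for all m ≠ i. -/
open MvPolynomial CategoryTheory

section Complex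

variable {V : Type} [DecidableEq V]

/-- A leaf of the simplicial complex whose facet set is `Fs`: a facet `F` which either is
the only facet, or for which there is a facet `G ≠ F` with `F ∩ F' ⊆ F ∩ G` for every
facet `F' ≠ F`. -/
def IsComplexLeaf (Fs : Set (Finset V)) (F : Finset V) : Prop :=
  F ∈ Fs ∧ ((∀ F' ∈ Fs, F' = F) ∨
    ∃ G ∈ Fs, G ≠ F ∧ ∀ F' ∈ Fs, F' ≠ F → F ∩ F' ⊆ F ∩ G)

/-- Connectedness of a (pure) simplicial complex given by its facet set: any two facets are
joined by a chain of facets with consecutive nonempty intersections. -/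
def ComplexConnected (Fs : Set (Finset V)) : Prop :=
  ∀ F ∈ Fs, ∀ F' ∈ Fs, ∃ c : List (Finset V), (∀ S ∈ c, S ∈ Fs) ∧
    c.head? = some F ∧ c.getLast? = some F' ∧ c.Chain' (fun A B => (A ∩ B).Nonempty)

/-- A proper chain of facets from `F` to `F'`: a sequence of distinct facets starting at `F`
and ending at `F'`, with consecutive intersections nonempty of cardinality one less than a
facet. -/
def IsProperChain (Fs : Set (Finset V)) (F F' : Finset V) (c : List (Finset V)) : Prop :=
  c.Nodup ∧ (∀ S ∈ c, S ∈ Fs) ∧ c.head? = some F ∧ c.getLast? = some F' ∧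
    c.Chain' (fun A B => (A ∩ B).Nonempty) ∧ c.Chain' (fun A B => (A ∩ B).card = B.card - 1)

/-- An irredundant proper chain: a proper chain from `F` to `F'` no proper subsequence of
which is a proper chain from `F` to `F'`. -/
def IsIrredundantProperChain (Fs : Set (Finset V)) (F F' : Finset V) (c : List (Finset V)) :
    Prop :=
  IsProperChain Fs F F' c ∧ ∀ c', c'.Sublist c → c' ≠ c → ¬ IsProperChain Fs F F' c'

/-- The distance between two facets: the minimal length of a proper irredundant chain from
`F` to `F'` (`∞` if there is none). -/
noncomputable def facetDist (Fs : Set (Finset V)) (F F' : Finset V) : ℕ∞ :=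
  sInf {m : ℕ∞ | ∃ c : List (Finset V), IsIrredundantProperChain Fs F F' c ∧
    m = ((c.length - 1 : ℕ) : ℕ∞)}

/-- A pure simplicial complex with facets of dimension `d` (given by its facet set `Fs`) is
properly-connected if `dist(F,F') = (d+1) - |F ∩ F'|` for all facets `F`, `F'` with
`F ∩ F' ≠ ∅`. -/
def ProperlyConnected (Fs : Set (Finset V)) (d : ℕ) : Prop :=
  ∀ F ∈ Fs, ∀ F' ∈ Fs, (F ∩ F').Nonempty →
    facetDist Fs F F' = (((d + 1) - (F ∩ F').card : ℕ) : ℕ∞)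

end Complex



set_option linter.unusedSectionVars false

section MyAux
open SimpleGraph

variable {V : Type} [Fintype V] [DecidableEq V] {G : SimpleGraph V} {root : V}

lemma my_parent_unique (hG : G.IsTree) {u u' v : V}
    (h : dirAdj G root u v) (h' : dirAdj G root u' v) : u = u' := by
  obtain ⟨ha, hd⟩ := h; obtain ⟨ha', hd'⟩ := h'
  obtain ⟨P, hP⟩ := hG.isConnected.exists_walk_length_eq_dist root u
  obtain ⟨P', hP'⟩ := hG.isConnected.exists_walk_length_eq_dist root u'
  have h1 : (P.concat ha).IsPath :=
    SimpleGraph.Walk.isPath_of_length_eq_dist _ (by rw [SimpleGraph.Walk.length_concat, hP, ← hd])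
  have h1' : (P'.concat ha').IsPath :=
    SimpleGraph.Walk.isPath_of_length_eq_dist _ (by rw [SimpleGraph.Walk.length_concat, hP', ← hd'])
  have heq : P.concat ha = P'.concat ha' := (hG.existsUnique_path root v).unique h1 h1'
  have h2 : (P.concat ha).reverse.getVert 1 = (P'.concat ha').reverse.getVert 1 := by rw [heq]
  simpa [SimpleGraph.Walk.reverse_concat, SimpleGraph.Walk.getVert_cons_succ,
    SimpleGraph.Walk.getVert_zero] using h2

lemma my_parent_exists (hG : G.IsTree) {v : V} (hv : G.dist root v ≠ 0) :
    ∃ u, dirAdj G root u v := by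
  obtain ⟨P, hP⟩ := hG.isConnected.exists_walk_length_eq_dist v root
  have hnil : ¬ P.Nil := by
    rw [SimpleGraph.Walk.nil_iff_length_eq, hP, SimpleGraph.dist_comm]
    exact hv
  have hadj : G.Adj (P.getVert 1) v := (P.adj_snd hnil).symm
  refine ⟨P.getVert 1, hadj, ?_⟩
  have hle : G.dist root (P.getVert 1) + 1 ≤ G.dist root v := by
    have h1 := SimpleGraph.dist_le P.tail
    have h2 := SimpleGraph.Walk.length_tail_add_one hnil
    have e1 : G.dist root (P.getVert 1) = G.dist (P.getVert 1) root := SimpleGraph.dist_comm ..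
    have e2 : G.dist root v = G.dist v root := SimpleGraph.dist_comm ..
    have e3 : G.dist P.snd root = G.dist (P.getVert 1) root := rfl
    omega
  have hge : G.dist root v ≤ G.dist root (P.getVert 1) + 1 := by
    obtain ⟨Q, hQ⟩ := hG.isConnected.exists_walk_length_eq_dist root (P.getVert 1)
    have := SimpleGraph.dist_le (Q.concat hadj)
    simpa [SimpleGraph.Walk.length_concat, hQ] using this
  omega

lemma my_dirpath_level :
    ∀ (l : List V) (x : V), IsDirPath G root (x :: l) →
      ∀ i (h : i < (x :: l).length), G.dist root ((x :: l)[i]'h) = G.dist root x + i := by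
  intro l
  induction l with
  | nil =>
    intro x _ i h
    have hi0 : i = 0 := by simpa using Nat.lt_one_iff.mp (by simpa using h)
    subst hi0; simp
  | cons b l' ih =>
    intro x hch i h
    have hch' : List.Chain' (dirAdj G root) (x :: b :: l') := hch
    simp only [List.Chain', List.isChain_cons_cons] at hch'
    match i with
    | 0 => simp
    | Nat.succ j =>
      have hgj := ih b hch'.2 j (by simpa using h)
      have hdb : G.dist root b = G.dist root x + 1 := hch'.1.2
      simp only [List.getElem_cons_succ] at *
      omega

lemma my_chain_eq_of_head {α : Type*} {S : α → α → Prop}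
    (hS : ∀ a b c, S a b → S a c → b = c) :
    ∀ (l1 l2 : List α), l1.Chain' S → l2.Chain' S → l1.length = l2.length →
      l1.head? = l2.head? → l1 = l2 := by
  intro l1
  induction l1 with
  | nil =>
    intro l2 _ _ hlen _
    exact (List.length_eq_zero_iff.mp hlen.symm).symm
  | cons a l ih =>
    intro l2 h1 h2 hlen hhead
    match l2 with
    | [] => simp at hlen
    | b :: m =>
      obtain rfl : a = b := by simpa using hhead
      have htl : l = m := by
        apply ih m h1.tail h2.tail (by simpa using hlen)
        match l, m with
        | [], [] => rfl
        | [], c :: m' => simp at hlen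
        | c :: l', [] => simp at hlen
        | c :: l', d :: m' =>
          simp only [List.Chain', List.isChain_cons_cons] at h1 h2
          simpa using hS a c d h1.1 h2.1
      rw [htl]

lemma my_chain_eq_of_last (hG : G.IsTree) :
    ∀ (l1 l2 : List V), IsDirPath G root l1 → IsDirPath G root l2 →
      l1.length = l2.length → l1.getLast? = l2.getLast? → l1 = l2 := by
  intro l1 l2 h1 h2 hlen hlast
  have key := my_chain_eq_of_head (S := fun a b => dirAdj G root b a)
    (fun a b c hb hc => my_parent_unique hG hb hc) l1.reverse l2.reverse
    (by simp only [List.Chain', List.isChain_reverse]; exact h1)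
    (by simp only [List.Chain', List.isChain_reverse]; exact h2)
    (by simpa using hlen)
    (by simpa [List.head?_reverse] using hlast)
  exact List.reverse_injective key

end MyAux

section MyAux2
set_option linter.unusedSectionVars false

variable {V : Type} [Fintype V] [DecidableEq V] {G : SimpleGraph V} {root : V}

lemma my_length_take_drop {α : Type*} (l : List α) (a b : ℕ) (h : a + b < l.length) :
    ((l.drop a).take (b+1)).length = b + 1 := by
  simp [List.length_take, List.length_drop]; omega

lemma my_getLast_take_drop {α : Type*} (l : List α) (a b : ℕ) (h : a + b < l.length) :
    ((l.drop a).take (b+1)).getLast? = some (l[a+b]) := by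
  rw [List.getLast?_eq_getElem?]
  rw [my_length_take_drop l a b h]
  simp only [Nat.add_sub_cancel]
  rw [List.getElem?_eq_getElem (by rw [my_length_take_drop l a b h]; omega)]
  congr 1
  rw [List.getElem_take, List.getElem_drop]

lemma my_head_mem_take_drop {α : Type*} (l : List α) (a b : ℕ) (h : a + b < l.length) :
    l[a]'(by omega) ∈ (l.drop a).take (b+1) := by
  have h0 : ((l.drop a).take (b+1))[0]'(by rw [my_length_take_drop l a b h]; omega)
      = l[a]'(by omega) := by
    rw [List.getElem_take, List.getElem_drop]
    congr 1
  rw [← h0]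
  exact List.getElem_mem _

lemma my_mem_of_level_le (hG : G.IsTree) {x y u w : V} {p q : List V}
    (hp : IsDirPath G root (x :: p)) (hq : IsDirPath G root (y :: q))
    (hu : u ∈ x :: p) (hw : w ∈ x :: p) (hwq : w ∈ y :: q)
    (hlev : G.dist root u ≤ G.dist root w)
    (hhead : G.dist root y ≤ G.dist root u) :
    u ∈ y :: q := by
  obtain ⟨i, hi, hui⟩ := List.mem_iff_getElem.mp hu
  obtain ⟨j, hj, hwj⟩ := List.mem_iff_getElem.mp hw
  obtain ⟨k, hk, hwk⟩ := List.mem_iff_getElem.mp hwq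
  have h1 : G.dist root u = G.dist root x + i := by
    rw [← hui]; exact my_dirpath_level _ x hp i hi
  have h2 : G.dist root w = G.dist root x + j := by
    rw [← hwj]; exact my_dirpath_level _ x hp j hj
  have h3 : G.dist root w = G.dist root y + k := by
    rw [← hwk]; exact my_dirpath_level _ y hq k hk
  have hij : i ≤ j := by omega
  obtain ⟨d, rfl⟩ : ∃ d, j = i + d := ⟨j - i, by omega⟩
  obtain ⟨a, rfl⟩ : ∃ a, k = a + d := ⟨k - d, by omega⟩
  have hiP : i + d < (x :: p).length := hj
  have haQ : a + d < (y :: q).length := hk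
  have hs12 : ((x :: p).drop i).take (d+1) = ((y :: q).drop a).take (d+1) := by
    apply my_chain_eq_of_last hG
    · exact (hp.drop i).take _
    · exact (hq.drop a).take _
    · rw [my_length_take_drop _ _ _ hiP, my_length_take_drop _ _ _ haQ]
    · rw [my_getLast_take_drop _ _ _ hiP, my_getLast_take_drop _ _ _ haQ, hwj, hwk]
  have humem : u ∈ ((x :: p).drop i).take (d+1) := by
    rw [← hui]
    exact my_head_mem_take_drop _ _ _ hiP
  rw [hs12] at humem
  exact List.mem_of_mem_drop (List.mem_of_mem_take humem)

lemma my_sup_facet {x : V} {p : List V} (hch : IsDirPath G root (x :: p)) :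
    (x :: p).toFinset.sup (fun v => G.dist root v) = G.dist root x + p.length := by
  apply le_antisymm
  · apply Finset.sup_le
    intro v hv
    obtain ⟨i, hi, rfl⟩ := List.mem_iff_getElem.mp (List.mem_toFinset.mp hv)
    rw [my_dirpath_level _ x hch i hi]
    simp only [List.length_cons] at hi
    omega
  · have hmem : (x :: p)[p.length]'(by simp) ∈ (x :: p).toFinset :=
      List.mem_toFinset.mpr (List.getElem_mem _)
    have hle := Finset.le_sup (f := fun v => G.dist root v) hmem
    rwa [my_dirpath_level _ x hch p.length (by simp)] at hle

lemma my_key_mem (hG : G.IsTree) {t : ℕ} (ht : t ≠ 0) {F F' : Finset V}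
    (hF : F ∈ pathFacets G root t) (hF' : F' ∈ pathFacets G root t)
    (hbl : F'.sup (fun v => G.dist root v) ≤ F.sup (fun v => G.dist root v))
    {u w : V} (huF : u ∈ F) (hwF : w ∈ F) (hwF' : w ∈ F')
    (hlev : G.dist root u ≤ G.dist root w) : u ∈ F' := by
  obtain ⟨P, hP, hPl, rfl⟩ := hF
  obtain ⟨Q, hQ, hQl, rfl⟩ := hF'
  cases P with
  | nil => rw [List.length_nil] at hPl; omega
  | cons x p =>
  cases Q with
  | nil => rw [List.length_nil] at hQl; omega
  | cons y q =>
  rw [my_sup_facet hP, my_sup_facet hQ] at hbl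
  rw [List.length_cons] at hPl hQl
  have hyx : G.dist root y ≤ G.dist root x := by omega
  have hxu : G.dist root x ≤ G.dist root u := by
    obtain ⟨i, hi, rfl⟩ := List.mem_iff_getElem.mp (List.mem_toFinset.mp huF)
    rw [my_dirpath_level _ x hP i hi]; omega
  rw [List.mem_toFinset] at huF hwF hwF' ⊢
  exact my_mem_of_level_le hG hP hQ huF hwF hwF' hlev (by omega)

lemma my_chain_to_root (hG : G.IsTree) {t : ℕ} (ht : 2 ≤ t) :
    ∀ (n : ℕ) (x : V) (p : List V), IsDirPath G root (x :: p) → (x :: p).length = t →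
      G.dist root x ≤ n →
      ∃ c : List (Finset V), (∀ A ∈ c, A ∈ pathFacets G root t) ∧
        c.head? = some (x :: p).toFinset ∧ (∃ R, c.getLast? = some R ∧ root ∈ R) ∧
        c.Chain' (fun A B => (A ∩ B).Nonempty) := by
  intro n
  induction n with
  | zero =>
    intro x p hch hlen hd
    have hx : root = x := (hG.isConnected.dist_eq_zero_iff).mp (Nat.le_zero.mp hd)
    refine ⟨[(x :: p).toFinset], ?_, rfl, ⟨(x :: p).toFinset, rfl, ?_⟩, List.isChain_singleton _⟩
    · intro A hA
      simp only [List.mem_singleton] at hA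
      subst hA
      exact ⟨x :: p, hch, hlen, rfl⟩
    · exact List.mem_toFinset.mpr (hx ▸ List.mem_cons_self)
  | succ n ih =>
    intro x p hch hlen hd
    by_cases h0 : G.dist root x = 0
    · have hx : root = x := (hG.isConnected.dist_eq_zero_iff).mp h0
      refine ⟨[(x :: p).toFinset], ?_, rfl, ⟨(x :: p).toFinset, rfl, ?_⟩, List.isChain_singleton _⟩
      · intro A hA
        simp only [List.mem_singleton] at hA
        subst hA
        exact ⟨x :: p, hch, hlen, rfl⟩
      · exact List.mem_toFinset.mpr (hx ▸ List.mem_cons_self)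
    · obtain ⟨u, hu⟩ := my_parent_exists hG h0
      cases p with
      | nil => rw [List.length_cons, List.length_nil] at hlen; omega
      | cons b p' =>
      have htail : List.Chain' (dirAdj G root) ((x :: b :: p').dropLast) :=
        List.IsChain.prefix hch (List.dropLast_prefix _)
      rw [List.dropLast_cons₂] at htail
      have hchq : IsDirPath G root (u :: x :: (b :: p').dropLast) :=
        List.isChain_cons_cons.mpr ⟨hu, htail⟩
      have hlenq : (u :: x :: (b :: p').dropLast).length = t := by
        simp only [List.length_cons, List.length_dropLast] at *
        omega
      have hdu : G.dist root u ≤ n := by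
        have := hu.2
        omega
      obtain ⟨c, hcmem, hchead, ⟨R, hR, hRroot⟩, hcchain⟩ := ih u (x :: (b :: p').dropLast) hchq hlenq hdu
      have hcne : c ≠ [] := by
        intro h; rw [h] at hchead; simp at hchead
      refine ⟨(x :: b :: p').toFinset :: c, ?_, rfl, ⟨R, ?_, hRroot⟩, ?_⟩
      · intro A hA
        rcases List.mem_cons.mp hA with h | h
        · subst h; exact ⟨x :: b :: p', hch, hlen, rfl⟩
        · exact hcmem A h
      · cases c with
        | nil => exact absurd rfl hcne
        | cons A c' => rw [List.getLast?_cons_cons]; exact hR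
      · apply List.isChain_cons.mpr
        refine ⟨?_, hcchain⟩
        intro y hy
        rw [hchead] at hy
        simp only [Option.mem_some_iff] at hy
        subst hy
        exact ⟨x, Finset.mem_inter.mpr ⟨List.mem_toFinset.mpr List.mem_cons_self,
          List.mem_toFinset.mpr (List.mem_cons.mpr (Or.inr List.mem_cons_self))⟩⟩

end MyAux2

/-- For a finite rooted tree `Γ` and `t ≥ 2`, the simplicial complex
`Δ_t(Γ)` is a simplicial tree: it is connected, and every nonempty subcomplex generated by a
subset of its facets contains a leaf. -/
theorem pathComplex_is_simplicial_tree
    (V : Type) [Fintype V] [DecidableEq V] (G : SimpleGraph V) (hG : G.IsTree) (root : V)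
    (t : ℕ) (ht : 2 ≤ t) :
    ComplexConnected (pathFacets G root t) ∧
      ∀ S : Set (Finset V), S ⊆ pathFacets G root t → S.Nonempty →
        ∃ F, IsComplexLeaf S F := by
  constructor
  · -- Connectivity
    intro F hF F' hF'
    obtain ⟨P, hP, hPl, hPF⟩ := hF
    obtain ⟨Q, hQ, hQl, hQF⟩ := hF'
    cases P with
    | nil => rw [List.length_nil] at hPl; omega
    | cons x p =>
    cases Q with
    | nil => rw [List.length_nil] at hQl; omega
    | cons y q =>
    obtain ⟨c1, hc1mem, hc1h, ⟨R1, hR1, hR1root⟩, hc1ch⟩ :=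
      my_chain_to_root hG ht (G.dist root x) x p hP hPl le_rfl
    obtain ⟨c2, hc2mem, hc2h, ⟨R2, hR2, hR2root⟩, hc2ch⟩ :=
      my_chain_to_root hG ht (G.dist root y) y q hQ hQl le_rfl
    have hc1ne : c1 ≠ [] := by intro h; rw [h] at hc1h; simp at hc1h
    have hc2ne : c2 ≠ [] := by intro h; rw [h] at hc2h; simp at hc2h
    refine ⟨c1 ++ c2.reverse, ?_, ?_, ?_, ?_⟩
    · intro A hA
      rcases List.mem_append.mp hA with h | h
      · exact hc1mem A h
      · exact hc2mem A (List.mem_reverse.mp h)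
    · rw [List.head?_append_of_ne_nil _ hc1ne, hc1h, hPF]
    · rw [List.getLast?_append_of_ne_nil _ (by simpa using hc2ne),
        List.getLast?_reverse, hc2h, hQF]
    · simp only [List.Chain', List.isChain_append]
      refine ⟨hc1ch, ?_, ?_⟩
      · rw [List.isChain_reverse]
        exact hc2ch.imp (fun A B hAB => by rwa [Finset.inter_comm] at hAB)
      · intro A hA B hB
        rw [hR1] at hA
        rw [List.head?_reverse, hR2] at hB
        simp only [Option.mem_some_iff] at hA hB
        subst hA; subst hB
        exact ⟨root, Finset.mem_inter.mpr ⟨hR1root, hR2root⟩⟩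
  · -- Leaf existence
    intro S hS hne
    obtain ⟨F, hFS, hFmax⟩ := Set.Finite.exists_maximalFor
      (fun F : Finset V => F.sup (fun v => G.dist root v)) S (Set.toFinite S) hne
    have hbl : ∀ F' ∈ S, F'.sup (fun v => G.dist root v) ≤ F.sup (fun v => G.dist root v) := by
      intro F' hF'
      by_contra hcon
      push_neg at hcon
      have := hFmax (j := F') hF' (le_of_lt hcon)
      beta_reduce at this
      omega
    refine ⟨F, hFS, ?_⟩
    by_cases hall : ∀ F' ∈ S, F' = F
    · exact Or.inl hall
    · push_neg at hall
      obtain ⟨F0, hF0S, hF0⟩ := hall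
      obtain ⟨Gm, hGmT, hGmmax⟩ := Set.Finite.exists_maximalFor
        (fun F' : Finset V => (F ∩ F').card) {F' ∈ S | F' ≠ F} (Set.toFinite _)
        ⟨F0, Set.mem_sep_iff.mpr ⟨hF0S, hF0⟩⟩
      obtain ⟨hGmS, hGmne⟩ := Set.mem_sep_iff.mp hGmT
      refine Or.inr ⟨Gm, hGmS, hGmne, ?_⟩
      intro F' hF'S hF'ne v hv
      rw [Finset.mem_inter] at hv
      obtain ⟨hvF, hvF'⟩ := hv
      rw [Finset.mem_inter]
      refine ⟨hvF, ?_⟩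
      by_cases hc : ∃ w ∈ F ∩ Gm, G.dist root v ≤ G.dist root w
      · obtain ⟨w, hw, hvw⟩ := hc
        rw [Finset.mem_inter] at hw
        exact my_key_mem hG (by omega) (hS hFS) (hS hGmS) (hbl Gm hGmS) hvF hw.1 hw.2 hvw
      · push_neg at hc
        have hsub : F ∩ Gm ⊆ F ∩ F' := by
          intro w hw
          have hw' := hc w hw
          rw [Finset.mem_inter] at hw ⊢
          exact ⟨hw.1, my_key_mem hG (by omega) (hS hFS) (hS hF'S) (hbl F' hF'S)
            hw.1 hvF hvF' (le_of_lt hw')⟩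
        have hnsub : ¬ (F ∩ F' ⊆ F ∩ Gm) := by
          intro h
          exact lt_irrefl _ (hc v (h (Finset.mem_inter.mpr ⟨hvF, hvF'⟩)))
        have hlt := Finset.card_lt_card (Finset.ssubset_def.mpr ⟨hsub, hnsub⟩)
        have := hGmmax (j := F') (Set.mem_sep_iff.mpr ⟨hF'S, hF'ne⟩) (le_of_lt hlt)
        beta_reduce at this
        omega
end

section
/- Let Γ be a finite rooted tree with edges directed away from the root, let t ≥ 2, and suppose Δ_t(Γ) is properly-connected. Let w = x_{i_1}⋯x_{i_t} be a minimal generator of I_t(Γ) with x_{i_t} a leaf of Γ, let F = {x_{i_1},…,x_{i_t}}, let Y = {y_1,…,y_a} be the union of G \ F over all facets G of Δ_t(Γ) with |G ∩ F| = t − 1, and let Z = Y ∪ F. Set Γ' = Γ \ {x_{i_t}} and Γ'' = Γ \ Z. Then the ideal equality I_t(Γ') ∩ (w) = w·(y_1,…,y_a) + w·I_t(Γ'') holds in R = k[x_1,…,x_n]. -/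
open MvPolynomial CategoryTheory

section AuxTree
set_option linter.unusedSectionVars false
set_option linter.deprecated false

variable {V : Type} [Fintype V] [DecidableEq V] {G : SimpleGraph V} {root : V}

lemma dirPath_step {q : List V} (hq : IsDirPath G root q) {i : ℕ} (h : i + 1 < q.length) :
    dirAdj G root (q.getD i root) (q.getD (i + 1) root) := by
  have h2 := List.isChain_iff_getElem.mp hq i (by omega)
  rw [List.getD_eq_getElem _ _ (by omega : i < q.length), List.getD_eq_getElem _ _ h]
  exact h2

lemma dirPath_dist_s6 {q : List V} (hq : IsDirPath G root q) :
    ∀ i, i < q.length →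
      G.dist root (q.getD i root) = G.dist root (q.getD 0 root) + i := by
  intro i
  induction i with
  | zero => simp
  | succ n ih =>
    intro h
    have hstep := (dirPath_step hq (show n + 1 < q.length from h)).2
    rw [hstep, ih (by omega)]
    omega

lemma dirPath_nodup_s6 {q : List V} (hq : IsDirPath G root q) : q.Nodup := by
  rw [List.nodup_iff_injective_get]
  rintro ⟨i, hi⟩ ⟨j, hj⟩ hij
  have h1 := dirPath_dist_s6 hq i hi
  have h2 := dirPath_dist_s6 hq j hj
  rw [List.getD_eq_get _ _ ⟨i, hi⟩] at h1
  rw [List.getD_eq_get _ _ ⟨j, hj⟩] at h2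
  rw [hij] at h1
  simp only [Fin.mk.injEq]
  omega

lemma mem_iff_getD {q : List V} {v : V} : v ∈ q ↔ ∃ i, i < q.length ∧ q.getD i root = v := by
  constructor
  · intro hv
    obtain ⟨⟨i, hi⟩, rfl⟩ := List.mem_iff_get.mp hv
    exact ⟨i, hi, List.getD_eq_get _ _ ⟨i, hi⟩⟩
  · rintro ⟨i, hi, rfl⟩
    rw [List.getD_eq_get _ _ ⟨i, hi⟩]
    exact List.get_mem _ _

lemma parent_unique_s6 (hG : G.IsTree) {u u' v : V} (h : G.Adj u v) (h' : G.Adj u' v)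
    (hd : G.dist root v = G.dist root u + 1) (hd' : G.dist root v = G.dist root u' + 1) :
    u = u' := by
  classical
  obtain ⟨W, hW⟩ := hG.isConnected.exists_walk_length_eq_dist root u
  obtain ⟨W', hW'⟩ := hG.isConnected.exists_walk_length_eq_dist root u'
  have hWp : W.IsPath := W.isPath_of_length_eq_dist hW
  have hW'p : W'.IsPath := W'.isPath_of_length_eq_dist hW'
  have hvW : v ∉ W.support := by
    intro hv
    have h1 : G.dist root v ≤ (W.takeUntil v hv).length := SimpleGraph.dist_le _
    have h2 := W.length_takeUntil_le hv
    omega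
  have hvW' : v ∉ W'.support := by
    intro hv
    have h1 : G.dist root v ≤ (W'.takeUntil v hv).length := SimpleGraph.dist_le _
    have h2 := W'.length_takeUntil_le hv
    omega
  have hP : (SimpleGraph.Walk.cons h.symm W.reverse).IsPath := by
    rw [SimpleGraph.Walk.cons_isPath_iff]
    refine ⟨hWp.reverse, ?_⟩
    rw [SimpleGraph.Walk.support_reverse, List.mem_reverse]
    exact hvW
  have hP' : (SimpleGraph.Walk.cons h'.symm W'.reverse).IsPath := by
    rw [SimpleGraph.Walk.cons_isPath_iff]
    refine ⟨hW'p.reverse, ?_⟩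
    rw [SimpleGraph.Walk.support_reverse, List.mem_reverse]
    exact hvW'
  have heq : SimpleGraph.Walk.cons h.symm W.reverse = SimpleGraph.Walk.cons h'.symm W'.reverse :=
    (hG.existsUnique_path v root).unique hP hP'
  have hsup := congrArg SimpleGraph.Walk.support heq
  rw [SimpleGraph.Walk.support_cons, SimpleGraph.Walk.support_cons] at hsup
  simp only [List.cons.injEq, true_and] at hsup
  rw [W.reverse.support_eq_cons, W'.reverse.support_eq_cons] at hsup
  simp only [List.cons.injEq] at hsup
  exact hsup.1

lemma dirPath_up (hG : G.IsTree) {a b : List V} (ha : IsDirPath G root a)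
    (hb : IsDirPath G root b) :
    ∀ (r α β : ℕ), α < a.length → β < b.length → a.getD α root = b.getD β root →
      r ≤ α → r ≤ β → a.getD (α - r) root = b.getD (β - r) root := by
  intro r
  induction r with
  | zero => intro α β _ _ h _ _; simpa using h
  | succ n ih =>
    intro α β hα hβ hab hnα hnβ
    have h1 := ih α β hα hβ hab (by omega) (by omega)
    have ha1 := dirPath_step ha (i := α - n - 1) (by omega)
    have hb1 := dirPath_step hb (i := β - n - 1) (by omega)
    have e1 : α - n - 1 + 1 = α - n := by omega
    have e2 : β - n - 1 + 1 = β - n := by omega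
    rw [e1] at ha1
    rw [e2, ← h1] at hb1
    have := parent_unique_s6 hG ha1.1 hb1.1 ha1.2 hb1.2
    have e3 : α - (n + 1) = α - n - 1 := by omega
    have e4 : β - (n + 1) = β - n - 1 := by omega
    rw [e3, e4]
    exact this

lemma dirPath_eq_of_last_eq (hG : G.IsTree) {a b : List V} (ha : IsDirPath G root a)
    (hb : IsDirPath G root b) (hlen : a.length = b.length) (hne : a ≠ [])
    (hlast : a.getD (a.length - 1) root = b.getD (b.length - 1) root) : a = b := by
  have hl : 0 < a.length := List.length_pos_iff.mpr hne
  apply List.ext_get hlen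
  intro i hi hi'
  have := dirPath_up hG ha hb (a.length - 1 - i) (a.length - 1) (b.length - 1)
    (by omega) (by omega) hlast (by omega) (by omega)
  have e1 : a.length - 1 - (a.length - 1 - i) = i := by omega
  have e2 : b.length - 1 - (a.length - 1 - i) = i := by omega
  rw [e1, e2] at this
  rw [List.getD_eq_get _ _ ⟨i, hi⟩, List.getD_eq_get _ _ ⟨i, hi'⟩] at this
  exact this

lemma path_through_leaf_eq (hG : G.IsTree) {t : ℕ} (ht : 2 ≤ t) {p : List V}
    (hp : IsDirPath G root p) (hplen : p.length = t) {xit : V}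
    (hxit : p.getD (t - 1) root = xit) (hleaf : graphLeaf G xit)
    {q : List V} (hq : IsDirPath G root q) (hqlen : q.length = t) (hmem : xit ∈ q) : q = p := by
  obtain ⟨s, hs, hsv⟩ := mem_iff_getD.mp hmem
  rw [hqlen] at hs
  have hs' : s = t - 1 := by
    by_contra hne
    have hs2 : s + 1 < t := by omega
    have hstep : dirAdj G root (q.getD s root) (q.getD (s + 1) root) :=
      dirPath_step hq (by omega)
    rw [hsv] at hstep
    have hpstep : dirAdj G root (p.getD (t - 2) root) (p.getD (t - 2 + 1) root) :=
      dirPath_step hp (by omega)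
    have e : t - 2 + 1 = t - 1 := by omega
    rw [e, hxit] at hpstep
    obtain ⟨u, hu, huniq⟩ := hleaf
    have h1 : q.getD (s + 1) root = u := huniq _ hstep.1
    have h2 : p.getD (t - 2) root = u := huniq _ hpstep.1.symm
    have d1 := hstep.2
    have d2 := hpstep.2
    rw [h1] at d1
    rw [h2] at d2
    omega
  apply dirPath_eq_of_last_eq hG hq hp (by omega) (by intro h; simp [h] at hqlen; omega)
  rw [hqlen, hplen, hxit, ← hs', hsv]

lemma facet_card {t : ℕ} {S : Finset V} (hS : S ∈ pathFacets G root t) : S.card = t := by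
  obtain ⟨q, hq, hlen, rfl⟩ := hS
  rw [List.toFinset_card_of_nodup (dirPath_nodup_s6 hq), hlen]

end AuxTree
section AuxY
set_option linter.unusedSectionVars false
set_option linter.deprecated false

variable {V : Type} [Fintype V] [DecidableEq V] {G : SimpleGraph V} {root : V}

lemma take_facet {t : ℕ} (ht : 2 ≤ t) {p : List V} (hp : IsDirPath G root p)
    (hplen : p.length = t) :
    (p.take (t - 1)).length = t - 1 ∧ IsDirPath G root (p.take (t - 1)) ∧
      (p.take (t - 1)).toFinset ⊆ p.toFinset ∧ (p.take (t - 1)).toFinset.card = t - 1 := by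
  have hlen : (p.take (t - 1)).length = t - 1 := by

    rw [List.length_take, hplen]; omega
  have hsub : (p.take (t - 1)).Sublist p := List.take_sublist _ _
  refine ⟨hlen, hp.take _, ?_, ?_⟩
  · intro v hv
    rw [List.mem_toFinset] at hv ⊢
    exact hsub.subset hv
  · rw [List.toFinset_card_of_nodup (hsub.nodup (dirPath_nodup_s6 hp)), hlen]

lemma getD_mem_notin_take {t : ℕ} (ht : 2 ≤ t) {p : List V} (hp : IsDirPath G root p)
    (hplen : p.length = t) {u : V} (hu : ∀ m, m < t → p.getD m root ≠ u) :
    u ∉ p.toFinset := by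
  rw [List.mem_toFinset, mem_iff_getD (root := root)]
  rintro ⟨i, hi, rfl⟩
  exact hu i (by omega) rfl

lemma parent_mem_Y {t : ℕ} (ht : 2 ≤ t) {p : List V} (hp : IsDirPath G root p)
    (hplen : p.length = t) {u : V} (hu : dirAdj G root u (p.getD 0 root)) :
    u ∈ {y | ∃ G' ∈ pathFacets G root t,
      (G' ∩ p.toFinset).card = t - 1 ∧ y ∈ G' \ p.toFinset} := by
  obtain ⟨htake, hchain, hsubT, hcardT⟩ := take_facet ht hp hplen
  have hpne : p ≠ [] := by intro h; rw [h] at hplen; simp at hplen; omega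
  have htne : p.take (t - 1) ≠ [] := by
    intro h; rw [h] at htake; simp at htake; omega
  -- the list u :: p.take (t-1)
  have hhead : (p.take (t - 1)).head? = some (p.getD 0 root) := by
    rw [List.head?_eq_head htne, Option.some_inj, List.head_eq_getElem]
    rw [List.getElem_take]
    rw [List.getD_eq_getElem _ _ (by omega : 0 < p.length)]
  have hdir : IsDirPath G root (u :: p.take (t - 1)) := by
    unfold IsDirPath List.Chain'
    rw [List.isChain_cons]
    refine ⟨?_, hchain⟩
    intro y hy
    rw [hhead, Option.mem_some_iff] at hy
    rw [← hy]
    exact hu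
  have hlen2 : (u :: p.take (t - 1)).length = t := by simp [htake]; omega
  have huF : u ∉ p.toFinset := by
    apply getD_mem_notin_take ht hp hplen
    intro m hm he
    have h1 := dirPath_dist_s6 hp m (by omega)
    have h2 := hu.2
    rw [he] at h1
    omega
  have hfacet : (u :: p.take (t - 1)).toFinset ∈ pathFacets G root t :=
    ⟨_, hdir, hlen2, rfl⟩
  refine ⟨(u :: p.take (t - 1)).toFinset, hfacet, ?_, ?_⟩
  · have : (u :: p.take (t - 1)).toFinset ∩ p.toFinset = (p.take (t - 1)).toFinset := by
      ext v
      simp only [List.toFinset_cons, Finset.mem_inter, Finset.mem_insert, List.mem_toFinset]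
      constructor
      · rintro ⟨hv1 | hv1, hv2⟩
        · exact absurd hv2 (hv1 ▸ (by simpa using huF))
        · exact hv1
      · intro hv
        exact ⟨Or.inr hv, by simpa using hsubT (List.mem_toFinset.mpr hv)⟩
    rw [this, hcardT]
  · rw [Finset.mem_sdiff]
    exact ⟨by simp, huF⟩

lemma child_mem_Y {t : ℕ} (ht : 2 ≤ t) {p : List V} (hp : IsDirPath G root p)
    (hplen : p.length = t) {y : V} (hy : dirAdj G root (p.getD (t - 2) root) y)
    (hyF : y ∉ p.toFinset) :
    y ∈ {y | ∃ G' ∈ pathFacets G root t,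
      (G' ∩ p.toFinset).card = t - 1 ∧ y ∈ G' \ p.toFinset} := by
  obtain ⟨htake, hchain, hsubT, hcardT⟩ := take_facet ht hp hplen
  have htne : p.take (t - 1) ≠ [] := by
    intro h; rw [h] at htake; simp at htake; omega
  have hlast : (p.take (t - 1)).getLast? = some (p.getD (t - 2) root) := by
    rw [List.getLast?_eq_getLast htne, Option.some_inj, List.getLast_eq_getElem,
      List.getElem_take]
    rw [List.getD_eq_getElem _ _ (by omega : t - 2 < p.length)]
    simp only [htake, show t - 1 - 1 = t - 2 from by omega]
  have hdir : IsDirPath G root (p.take (t - 1) ++ [y]) := by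
    unfold IsDirPath List.Chain'
    rw [List.isChain_append]
    refine ⟨hchain, List.isChain_singleton _, ?_⟩
    intro a ha b hb
    rw [hlast, Option.mem_some_iff] at ha
    simp only [List.head?_cons, Option.mem_some_iff] at hb
    rw [← ha, ← hb]
    exact hy
  have hlen2 : (p.take (t - 1) ++ [y]).length = t := by simp [htake]; omega
  have hfacet : (p.take (t - 1) ++ [y]).toFinset ∈ pathFacets G root t :=
    ⟨_, hdir, hlen2, rfl⟩
  refine ⟨(p.take (t - 1) ++ [y]).toFinset, hfacet, ?_, ?_⟩
  · have : (p.take (t - 1) ++ [y]).toFinset ∩ p.toFinset = (p.take (t - 1)).toFinset := by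
      ext v
      simp only [List.toFinset_append, List.toFinset_cons, List.toFinset_nil,
        insert_empty_eq, Finset.mem_inter, Finset.mem_union, Finset.mem_singleton]
      constructor
      · rintro ⟨hv1 | hv1, hv2⟩
        · exact hv1
        · exact absurd hv2 (hv1 ▸ hyF)
      · intro hv
        exact ⟨Or.inl hv, hsubT hv⟩
    rw [this, hcardT]
  · rw [Finset.mem_sdiff]
    exact ⟨by simp, hyF⟩

end AuxY
section AuxChain
set_option linter.unusedSectionVars false
set_option linter.deprecated false

variable {V : Type} [Fintype V] [DecidableEq V] {G : SimpleGraph V} {root : V}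

lemma getD_inj {q : List V} (hq : IsDirPath G root q) {i j : ℕ} (hi : i < q.length)
    (hj : j < q.length) (h : q.getD i root = q.getD j root) : i = j := by
  have h1 := dirPath_dist_s6 hq i hi
  have h2 := dirPath_dist_s6 hq j hj
  rw [h] at h1
  omega

lemma getD_drop {l : List V} {k i : ℕ} (h : k + i < l.length) :
    (l.drop k).getD i root = l.getD (k + i) root := by
  rw [List.getD_eq_getElem _ _ (by rw [List.length_drop]; omega),
    List.getD_eq_getElem _ _ h, List.getElem_drop]

lemma getD_take {l : List V} {k i : ℕ} (hik : i < k) (h : i < l.length) :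
    (l.take k).getD i root = l.getD i root := by
  rw [List.getD_eq_getElem _ _ (by rw [List.length_take]; omega),
    List.getD_eq_getElem _ _ h, List.getElem_take]

lemma inter_card_step_one {t : ℕ} {A B : Finset V} (hA : A.card = t) (hAB : (A ∩ B).card = t - 1)
    (ht : 1 ≤ t) (S : Finset V) : (A ∩ S).card ≤ (B ∩ S).card + 1 := by
  have h1 : (A \ B).card = 1 := by
    have := Finset.card_inter_add_card_sdiff A B
    omega
  calc (A ∩ S).card ≤ ((B ∩ S) ∪ (A \ B)).card := Finset.card_le_card (by
        intro v hv
        rw [Finset.mem_inter] at hv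
        rw [Finset.mem_union]
        by_cases hvB : v ∈ B
        · exact Or.inl (Finset.mem_inter.mpr ⟨hvB, hv.2⟩)
        · exact Or.inr (Finset.mem_sdiff.mpr ⟨hv.1, hvB⟩))
    _ ≤ (B ∩ S).card + (A \ B).card := Finset.card_union_le _ _
    _ = (B ∩ S).card + 1 := by rw [h1]

lemma tele_lb {f : ℕ → ℕ} {N : ℕ} (hstep : ∀ i, i + 1 ≤ N → f (i + 1) ≤ f i + 1) :
    ∀ k i, i ≤ k → k ≤ N → f k ≤ f i + (k - i) := by
  intro k
  induction k with
  | zero => intro i h1 _; interval_cases i; simp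
  | succ n ih =>
    intro i h1 h2
    rcases Nat.eq_or_lt_of_le h1 with h | h
    · subst h; simp
    · have := ih i (by omega) (by omega)
      have := hstep n (by omega)
      omega

lemma tele_ub {f : ℕ → ℕ} {N : ℕ} (hstep : ∀ i, i + 1 ≤ N → f i ≤ f (i + 1) + 1) :
    ∀ k i, i ≤ k → k ≤ N → f i ≤ f k + (k - i) := by
  intro k
  induction k with
  | zero => intro i h1 _; interval_cases i; simp
  | succ n ih =>
    intro i h1 h2
    rcases Nat.eq_or_lt_of_le h1 with h | h
    · subst h; simp
    · have := ih i (by omega) (by omega)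
      have := hstep n (by omega)
      omega

lemma bad_config (hG : G.IsTree) {t : ℕ}
    (hPC : ProperlyConnected (pathFacets G root t) (t - 1))
    {p q : List V} (hp : IsDirPath G root p) (hq : IsDirPath G root q)
    (hplen : p.length = t) (hqlen : q.length = t)
    {c j : ℕ} (hcj : c ≤ j) (hjt : j + 3 ≤ t)
    (hqp : ∀ r, r ≤ c → q.getD r root = p.getD (j - c + r) root)
    (hqmax : ∀ r, c < r → r < t → q.getD r root ∉ p.toFinset) : False := by
  classical
  have ht3 : 3 ≤ t := by omega
  set F := p.toFinset with hF
  set Q := q.toFinset with hQ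
  set S1 := (p.drop (j + 1)).toFinset with hS1
  set S2 := (q.drop (c + 1)).toFinset with hS2
  have hS1mem : ∀ v, v ∈ S1 ↔ ∃ m, j < m ∧ m < t ∧ p.getD m root = v := by
    intro v
    rw [hS1, List.mem_toFinset, mem_iff_getD (root := root)]
    constructor
    · rintro ⟨i, hi, rfl⟩
      rw [List.length_drop, hplen] at hi
      exact ⟨j + 1 + i, by omega, by omega, (getD_drop (by omega)).symm⟩
    · rintro ⟨m, hm1, hm2, rfl⟩
      exact ⟨m - (j + 1), by rw [List.length_drop, hplen]; omega,
        by rw [getD_drop (by omega : j + 1 + (m - (j+1)) < p.length)]; congr 1; omega⟩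
  have hS2mem : ∀ v, v ∈ S2 ↔ ∃ n, c < n ∧ n < t ∧ q.getD n root = v := by
    intro v
    rw [hS2, List.mem_toFinset, mem_iff_getD (root := root)]
    constructor
    · rintro ⟨i, hi, rfl⟩
      rw [List.length_drop, hqlen] at hi
      exact ⟨c + 1 + i, by omega, by omega, (getD_drop (by omega)).symm⟩
    · rintro ⟨n, hn1, hn2, rfl⟩
      exact ⟨n - (c + 1), by rw [List.length_drop, hqlen]; omega,
        by rw [getD_drop (by omega : c + 1 + (n - (c+1)) < q.length)]; congr 1; omega⟩
  have hS1card : S1.card = t - (j + 1) := by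
    rw [hS1, List.toFinset_card_of_nodup ((List.drop_sublist _ _).nodup (dirPath_nodup_s6 hp)),
      List.length_drop, hplen]
  have hS2card : S2.card = t - (c + 1) := by
    rw [hS2, List.toFinset_card_of_nodup ((List.drop_sublist _ _).nodup (dirPath_nodup_s6 hq)),
      List.length_drop, hqlen]
  have hS1F : S1 ⊆ F := fun v hv => by
    obtain ⟨m, _, hm2, rfl⟩ := (hS1mem v).mp hv
    exact List.mem_toFinset.mpr ((mem_iff_getD (root := root)).mpr ⟨m, by omega, rfl⟩)
  have hS2Q : S2 ⊆ Q := fun v hv => by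
    obtain ⟨n, _, hn2, rfl⟩ := (hS2mem v).mp hv
    exact List.mem_toFinset.mpr ((mem_iff_getD (root := root)).mpr ⟨n, by omega, rfl⟩)
  have hqc : q.getD c root = p.getD j root := by
    have := hqp c le_rfl
    rw [show j - c + c = j from by omega] at this
    exact this
  -- S1 and Q are disjoint
  have hS1Q : ∀ v ∈ S1, v ∉ Q := by
    intro v hv hvQ
    obtain ⟨m, hm1, hm2, rfl⟩ := (hS1mem v).mp hv
    obtain ⟨n, hn, hnv⟩ := (mem_iff_getD (root := root)).mp (List.mem_toFinset.mp hvQ)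
    rw [hqlen] at hn
    rcases le_or_gt n c with h | h
    · rw [hqp n h] at hnv
      have := getD_inj hp (by omega) (by omega) hnv
      omega
    · exact hqmax n h hn (hnv ▸ List.mem_toFinset.mpr ((mem_iff_getD (root := root)).mpr ⟨m, by omega, rfl⟩))
  -- S2 and F are disjoint
  have hS2F : ∀ v ∈ S2, v ∉ F := by
    intro v hv hvF
    obtain ⟨n, hn1, hn2, rfl⟩ := (hS2mem v).mp hv
    exact hqmax n hn1 hn2 hvF
  -- mutual exclusion
  have hmutex : ∀ A ∈ pathFacets G root t, (A ∩ S1).Nonempty → (A ∩ S2).Nonempty → False := by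
    rintro A ⟨a, ha, halen, rfl⟩ ⟨u, hu⟩ ⟨v, hv⟩
    rw [Finset.mem_inter] at hu hv
    obtain ⟨α, hα, hαu⟩ := (mem_iff_getD (root := root)).mp (List.mem_toFinset.mp hu.1)
    obtain ⟨β, hβ, hβv⟩ := (mem_iff_getD (root := root)).mp (List.mem_toFinset.mp hv.1)
    obtain ⟨m, hm1, hm2, hmu⟩ := (hS1mem u).mp hu.2
    obtain ⟨n, hn1, hn2, hnv⟩ := (hS2mem v).mp hv.2
    have Eaα := dirPath_dist_s6 ha α hα
    have Eaβ := dirPath_dist_s6 ha β hβ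
    have Epm := dirPath_dist_s6 hp m (by omega)
    have Eqn := dirPath_dist_s6 hq n (by omega)
    have Epj := dirPath_dist_s6 hp j (by omega)
    have Eqc := dirPath_dist_s6 hq c (by omega)
    rw [hαu] at Eaα
    rw [hβv] at Eaβ
    rw [hmu] at Epm
    rw [hnv] at Eqn
    rw [hqc] at Eqc
    rcases le_or_gt α β with hab | hab
    · have hval : a.getD β root = q.getD n root := by rw [hβv, hnv]
      have hr1 : β - α ≤ n ∧ c + 1 ≤ n - (β - α) := by omega
      have h5 := dirPath_up hG ha hq (β - α) β n hβ (by omega) hval (by omega) hr1.1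
      rw [show β - (β - α) = α from by omega, hαu] at h5
      exact hqmax (n - (β - α)) (by omega) (by omega)
        (h5 ▸ (List.mem_toFinset.mpr ((mem_iff_getD (root := root)).mpr ⟨m, by omega, hmu⟩)))
    · have hval : a.getD α root = p.getD m root := by rw [hαu, hmu]
      have hr1 : α - β ≤ m ∧ j + 1 ≤ m - (α - β) := by omega
      have h5 := dirPath_up hG ha hp (α - β) α m hα (by omega) hval (by omega) hr1.1
      rw [show α - (α - β) = β from by omega, hβv] at h5
      exact hqmax n hn1 hn2 (by
        rw [hnv, h5]
        exact List.mem_toFinset.mpr ((mem_iff_getD (root := root)).mpr ⟨m - (α - β), by omega, rfl⟩))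
  -- F and Q are facets
  have hFfacet : F ∈ pathFacets G root t := ⟨p, hp, hplen, rfl⟩
  have hQfacet : Q ∈ pathFacets G root t := ⟨q, hq, hqlen, rfl⟩
  have hFQne : (F ∩ Q).Nonempty := by
    refine ⟨p.getD j root, Finset.mem_inter.mpr ⟨?_, ?_⟩⟩
    · exact List.mem_toFinset.mpr ((mem_iff_getD (root := root)).mpr ⟨j, by omega, rfl⟩)
    · exact List.mem_toFinset.mpr ((mem_iff_getD (root := root)).mpr ⟨c, by omega, hqc⟩)
  have hFQcard : (F ∩ Q).card = c + 1 := by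
    have heq : F ∩ Q = (q.take (c + 1)).toFinset := by
      ext v
      rw [Finset.mem_inter]
      constructor
      · rintro ⟨hvF, hvQ⟩
        obtain ⟨n, hn, rfl⟩ := (mem_iff_getD (root := root)).mp (List.mem_toFinset.mp hvQ)
        rw [hqlen] at hn
        have hnc : n ≤ c := by
          by_contra hnc
          exact hqmax n (by omega) hn hvF
        refine List.mem_toFinset.mpr ((mem_iff_getD (root := root)).mpr ⟨n, ?_, ?_⟩)
        · rw [List.length_take]; omega
        · exact getD_take (by omega) (by omega)
      · intro hv
        obtain ⟨n, hn, hvn⟩ := (mem_iff_getD (root := root)).mp (List.mem_toFinset.mp hv)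
        rw [List.length_take, hqlen] at hn
        have hnc : n ≤ c := by omega
        rw [← hvn, getD_take (by omega) (by omega : n < q.length)]
        constructor
        · rw [hqp n hnc]
          exact List.mem_toFinset.mpr ((mem_iff_getD (root := root)).mpr ⟨j - c + n, by omega, rfl⟩)
        · exact List.mem_toFinset.mpr ((mem_iff_getD (root := root)).mpr ⟨n, by omega, rfl⟩)
    rw [heq, List.toFinset_card_of_nodup ((List.take_sublist _ _).nodup (dirPath_nodup_s6 hq)),
      List.length_take, hqlen]
    omega
  -- lower bound on lengths of proper chains
  have hLB : ∀ m ∈ {m : ℕ∞ | ∃ L, IsIrredundantProperChain (pathFacets G root t) F Q L ∧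
      m = ((L.length - 1 : ℕ) : ℕ∞)}, ((t - c : ℕ) : ℕ∞) ≤ m := by
    rintro m ⟨L, ⟨⟨hnodup, hmemL, hhead, hlast, hnon, hcard⟩, -⟩, rfl⟩
    have hLne : L ≠ [] := by
      intro h
      rw [h] at hhead
      simp at hhead
    set N := L.length - 1 with hN
    have hLpos : 0 < L.length := List.length_pos_iff.mpr hLne
    have hL0 : L.getD 0 ∅ = F := by
      rw [List.head?_eq_head hLne] at hhead
      rw [List.getD_eq_getElem _ _ hLpos, ← List.head_eq_getElem hLne]
      exact Option.some_inj.mp hhead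
    have hLN : L.getD N ∅ = Q := by
      rw [List.getLast?_eq_getLast hLne] at hlast
      rw [List.getD_eq_getElem _ _ (by omega), ← List.getLast_eq_getElem hLne]
      exact Option.some_inj.mp hlast
    have hAmem : ∀ i, i ≤ N → L.getD i ∅ ∈ pathFacets G root t := by
      intro i hi
      rw [List.getD_eq_getElem _ _ (by omega)]
      exact hmemL _ (List.getElem_mem _)
    have hAcard : ∀ i, i ≤ N → (L.getD i ∅).card = t := fun i hi => facet_card (hAmem i hi)
    have hstepcard : ∀ i, i + 1 ≤ N → ((L.getD i ∅) ∩ (L.getD (i + 1) ∅)).card = t - 1 := by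
      intro i hi
      have h2 := List.isChain_iff_getElem.mp hcard i (by omega)
      rw [← List.getD_eq_getElem _ ∅ (by omega : i < L.length),
        ← List.getD_eq_getElem _ ∅ (by omega : i + 1 < L.length)] at h2
      rw [h2, hAcard (i + 1) (by omega)]
    set φ : ℕ → ℕ := fun i => ((L.getD i ∅) ∩ S1).card with hφ
    set ψ : ℕ → ℕ := fun i => ((L.getD i ∅) ∩ S2).card with hψ
    have hφstep : ∀ i, i + 1 ≤ N → φ i ≤ φ (i + 1) + 1 :=
      fun i hi => inter_card_step_one (hAcard i (by omega)) (hstepcard i hi) (by omega) S1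
    have hψstep : ∀ i, i + 1 ≤ N → ψ (i + 1) ≤ ψ i + 1 := by
      intro i hi
      refine inter_card_step_one (hAcard (i + 1) (by omega)) ?_ (by omega) S2
      rw [Finset.inter_comm]
      exact hstepcard i hi
    have hφ0 : φ 0 = t - (j + 1) := by
      rw [hφ]
      simp only
      rw [hL0, Finset.inter_eq_right.mpr hS1F, hS1card]
    have hφN : φ N = 0 := by
      rw [hφ]
      simp only
      rw [hLN, Finset.card_eq_zero]
      ext v
      simp only [Finset.mem_inter, Finset.notMem_empty, iff_false, not_and]
      intro hvQ hvS1
      exact hS1Q v hvS1 hvQ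
    have hψN : ψ N = t - (c + 1) := by
      rw [hψ]
      simp only
      rw [hLN, Finset.inter_eq_right.mpr hS2Q, hS2card]
    set M := Nat.findGreatest (fun i => 0 < φ i) N with hM
    have hφ0pos : 0 < φ 0 := by omega
    have hMpos : 0 < φ M := Nat.findGreatest_spec (P := fun i => 0 < φ i) (Nat.zero_le N) hφ0pos
    have hMN : M ≤ N := Nat.findGreatest_le N
    have hMmax : ∀ k, M < k → k ≤ N → φ k = 0 := by
      intro k h1 h2
      have := Nat.findGreatest_is_greatest (P := fun i => 0 < φ i) h1 h2
      omega
    have hMneN : M ≠ N := by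
      intro h
      rw [h, hφN] at hMpos
      omega
    have hψM : ψ M = 0 := by
      by_contra h
      have h1 : (L.getD M ∅ ∩ S1).Nonempty := Finset.card_pos.mp hMpos
      have h2 : (L.getD M ∅ ∩ S2).Nonempty := Finset.card_pos.mp (Nat.pos_of_ne_zero h)
      exact hmutex _ (hAmem M hMN) h1 h2
    have htele : ψ N ≤ ψ M + (N - M) := tele_lb hψstep N M hMN le_rfl
    have hM1 : 1 ≤ M := by
      by_contra h
      have hM0 : M = 0 := by omega
      have hN1 : 1 ≤ N := by omega
      have h1 : φ 1 = 0 := hMmax 1 (by omega) hN1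
      have h2 : φ 0 ≤ φ 1 + 1 := hφstep 0 (by omega)
      omega
    have hNbig : t - c ≤ N := by omega
    exact Nat.cast_le.mpr hNbig
  have hle := le_sInf hLB
  rw [show sInf {m : ℕ∞ | ∃ L, IsIrredundantProperChain (pathFacets G root t) F Q L ∧
      m = ((L.length - 1 : ℕ) : ℕ∞)} = facetDist (pathFacets G root t) F Q from rfl] at hle
  rw [hPC F hFfacet Q hQfacet hFQne, hFQcard, Nat.cast_le] at hle
  omega

end AuxChain
section AuxMain
set_option linter.unusedSectionVars false
set_option linter.deprecated false

variable {V : Type} [Fintype V] [DecidableEq V] {G : SimpleGraph V} {root : V}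

lemma exists_Y_vertex (hG : G.IsTree) {t : ℕ} (ht : 2 ≤ t)
    (hPC : ProperlyConnected (pathFacets G root t) (t - 1))
    {p : List V} (hp : IsDirPath G root p) (hplen : p.length = t)
    {xit : V} (hxit : p.getD (t - 1) root = xit) (hleaf : graphLeaf G xit)
    {q : List V} (hq : IsDirPath G root q) (hqlen : q.length = t)
    (hxq : xit ∉ q) (hne : ∃ v, v ∈ q ∧ v ∈ p) :
    ∃ y, y ∈ {y | ∃ G' ∈ pathFacets G root t,
      (G' ∩ p.toFinset).card = t - 1 ∧ y ∈ G' \ p.toFinset} ∧ y ∈ q := by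
  classical
  obtain ⟨v, hvq, hvp⟩ := hne
  obtain ⟨s, hs, hsv⟩ := (mem_iff_getD (root := root)).mp hvq
  rw [hqlen] at hs
  -- c : the largest index of q landing in p
  set c := Nat.findGreatest (fun r => q.getD r root ∈ p.toFinset) (t - 1) with hc
  have hcP : q.getD c root ∈ p.toFinset :=
    Nat.findGreatest_spec (P := fun r => q.getD r root ∈ p.toFinset) (m := s)
      (by omega) (by show q.getD s root ∈ p.toFinset; rw [hsv]; exact List.mem_toFinset.mpr hvp)
  have hcmax : ∀ r, c < r → r < t → q.getD r root ∉ p.toFinset := by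
    intro r h1 h2
    exact Nat.findGreatest_is_greatest (P := fun r => q.getD r root ∈ p.toFinset) h1 (by omega)
  have hct : c < t := by
    have := Nat.findGreatest_le (P := fun r => q.getD r root ∈ p.toFinset) (t - 1)
    omega
  obtain ⟨j, hj, hjc'⟩ := (mem_iff_getD (root := root)).mp (List.mem_toFinset.mp hcP)
  rw [hplen] at hj
  have hjc := hjc'.symm
  -- `xit` is not an entry of `q`
  have hxq' : ∀ r, r < t → q.getD r root ≠ xit := by
    intro r hr he
    exact hxq (he ▸ (mem_iff_getD (root := root)).mpr ⟨r, by omega, rfl⟩)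
  rcases lt_or_ge j c with hcj | hcj
  · -- q climbs above the top of p: the parent of p's head is in q
    have h5 := dirPath_up hG hq hp j c j (by omega) (by omega) hjc (by omega) le_rfl
    rw [Nat.sub_self] at h5
    have hstep := dirPath_step hq (i := c - j - 1) (by omega)
    rw [show c - j - 1 + 1 = c - j from by omega, h5] at hstep
    refine ⟨q.getD (c - j - 1) root, parent_mem_Y ht hp hplen hstep, ?_⟩
    exact (mem_iff_getD (root := root)).mpr ⟨c - j - 1, by omega, rfl⟩
  · -- q's initial segment lies inside p
    have hqp : ∀ r, r ≤ c → q.getD r root = p.getD (j - c + r) root := by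
      intro r hr
      have h5 := dirPath_up hG hq hp (c - r) c j (by omega) (by omega) hjc (by omega) (by omega)
      rw [show c - (c - r) = r from by omega, show j - (c - r) = j - c + r from by omega] at h5
      exact h5
    have hjt : j < t - 1 := by
      rcases lt_or_ge j (t - 1) with h | h
      · exact h
      · exfalso
        have hj1 : j = t - 1 := by omega
        rw [hj1, hxit] at hjc
        exact hxq' c (by omega) hjc
    rcases lt_or_ge j (t - 2) with hj2 | hj2
    · -- bad configuration, contradiction with proper-connectedness
      exact absurd (bad_config hG hPC hp hq hplen hqlen hcj (by omega) hqp hcmax) (fun h => h)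
    · -- j = t - 2 : q branches off at p's second-to-last vertex
      have hj3 : j = t - 2 := by omega
      have hct1 : c + 1 < t := by
        rcases lt_or_ge (c + 1) t with h | h
        · exact h
        · exfalso
          have : c = t - 1 := by omega
          -- then j - c + c = j gives q (t-1) ∈ p, fine, but also c ≤ j = t-2 < t-1
          omega
      have hstep := dirPath_step hq (i := c) (by omega)
      have hqcval : q.getD c root = p.getD (t - 2) root := by
        rw [hqp c le_rfl, show j - c + c = j from by omega, hj3]
      rw [hqcval] at hstep
      have hyF : q.getD (c + 1) root ∉ p.toFinset := hcmax (c + 1) (by omega) (by omega)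
      refine ⟨q.getD (c + 1) root, child_mem_Y ht hp hplen hstep hyF, ?_⟩
      exact (mem_iff_getD (root := root)).mpr ⟨c + 1, by omega, rfl⟩

end AuxMain
section AuxAlg
set_option linter.unusedSectionVars false
set_option linter.deprecated false

variable {V : Type} [Fintype V] [DecidableEq V] {G : SimpleGraph V} {root : V}
variable {K : Type} [Field K]

/-- The exponent vector of a squarefree monomial supported on `S`. -/
noncomputable def eS (S : Finset V) : V →₀ ℕ := ∑ v ∈ S, Finsupp.single v 1

lemma eS_apply (S : Finset V) (v : V) : eS S v = if v ∈ S then 1 else 0 := by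
  rw [eS, Finsupp.finset_sum_apply]
  simp [Finsupp.single_apply]

lemma eS_le_iff {S : Finset V} {d : V →₀ ℕ} : eS S ≤ d ↔ ∀ v ∈ S, 1 ≤ d v := by
  rw [Finsupp.le_def]
  constructor
  · intro h v hv
    have := h v
    rwa [eS_apply, if_pos hv] at this
  · intro h v
    rw [eS_apply]
    split
    · exact h v ‹_›
    · exact Nat.zero_le _

lemma eS_union {A B : Finset V} (h : Disjoint A B) : eS (A ∪ B) = eS A + eS B :=
  Finset.sum_union h

lemma eS_singleton (v : V) : eS {v} = Finsupp.single v 1 := Finset.sum_singleton _ _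

lemma prod_map_X (l : List V) :
    (l.map X).prod = monomial ((l.map fun v => Finsupp.single v 1).sum) (1 : K) := by
  induction l with
  | nil => simp
  | cons v l ih =>
    rw [List.map_cons, List.prod_cons, ih,
      show (X v : MvPolynomial V K) = monomial (Finsupp.single v 1) 1 from rfl,
      monomial_mul, one_mul, List.map_cons, List.sum_cons]

lemma prod_map_X_nodup {l : List V} (hl : l.Nodup) :
    (l.map X).prod = monomial (eS l.toFinset) (1 : K) := by
  rw [prod_map_X, eS, List.sum_toFinset _ hl]

lemma pathIdealOn_eq (S : Set V) (t : ℕ) :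
    pathIdealOn G root K S t = Ideal.span ((fun d => monomial d (1 : K)) ''
      {d | ∃ q : List V, IsDirPath G root q ∧ q.length = t ∧ (∀ v ∈ q, v ∈ S) ∧
        d = eS q.toFinset}) := by
  unfold pathIdealOn
  congr 1
  ext m
  constructor
  · rintro ⟨q, h1, h2, h3, rfl⟩
    exact ⟨eS q.toFinset, ⟨q, h1, h2, h3, rfl⟩, (prod_map_X_nodup (dirPath_nodup_s6 h1)).symm⟩
  · rintro ⟨d, ⟨q, h1, h2, h3, rfl⟩, rfl⟩
    exact ⟨q, h1, h2, h3, (prod_map_X_nodup (dirPath_nodup_s6 h1)).symm⟩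

lemma pathIdealOn_mono {S S' : Set V} (h : S ⊆ S') (t : ℕ) :
    pathIdealOn G root K S t ≤ pathIdealOn G root K S' t := by
  apply Ideal.span_mono
  rintro m ⟨q, h1, h2, h3, rfl⟩
  exact ⟨q, h1, h2, fun v hv => h (h3 v hv), rfl⟩

lemma wXy_mem (hG : G.IsTree) {t : ℕ} (ht : 2 ≤ t) {p : List V} (hp : IsDirPath G root p)
    (hplen : p.length = t) {xit : V} (hxit : p.getD (t - 1) root = xit)
    (hleaf : graphLeaf G xit) {y : V}
    (hy : y ∈ {y | ∃ G' ∈ pathFacets G root t,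
      (G' ∩ p.toFinset).card = t - 1 ∧ y ∈ G' \ p.toFinset}) :
    (p.map X).prod * X y ∈ pathIdealOn G root K ({xit}ᶜ : Set V) t := by
  classical
  obtain ⟨G', ⟨q, hq, hqlen, rfl⟩, hcard, hyG⟩ := hy
  have hqnodup := dirPath_nodup_s6 hq
  have hpnodup := dirPath_nodup_s6 hp
  have hxq : xit ∉ q := by
    intro hmem
    have heq := path_through_leaf_eq hG ht hp hplen hxit hleaf hq hqlen hmem
    rw [heq, Finset.inter_self, List.toFinset_card_of_nodup hpnodup, hplen] at hcard
    omega
  have hQcard : q.toFinset.card = t := by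
    rw [List.toFinset_card_of_nodup hqnodup, hqlen]
  have hsd : (q.toFinset \ p.toFinset).card = 1 := by
    have := Finset.card_inter_add_card_sdiff q.toFinset p.toFinset
    omega
  obtain ⟨a, ha⟩ := Finset.card_eq_one.mp hsd
  have hya : a = y := by
    have := hyG
    rw [ha, Finset.mem_singleton] at this
    exact this.symm
  subst hya
  -- exponent identity
  have hid : eS p.toFinset + Finsupp.single a 1 = eS q.toFinset + eS (p.toFinset \ q.toFinset) := by
    have hQdec : q.toFinset \ p.toFinset ∪ q.toFinset ∩ p.toFinset = q.toFinset :=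
      Finset.sdiff_union_inter _ _
    have hFdec : p.toFinset \ q.toFinset ∪ p.toFinset ∩ q.toFinset = p.toFinset :=
      Finset.sdiff_union_inter _ _
    have hd1 : Disjoint (q.toFinset \ p.toFinset) (q.toFinset ∩ p.toFinset) :=
      Finset.disjoint_sdiff_inter _ _
    have hd2 : Disjoint (p.toFinset \ q.toFinset) (p.toFinset ∩ q.toFinset) :=
      Finset.disjoint_sdiff_inter _ _
    calc eS p.toFinset + Finsupp.single a 1
        = eS (p.toFinset \ q.toFinset) + eS (p.toFinset ∩ q.toFinset) + Finsupp.single a 1 := by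
          rw [← eS_union hd2, hFdec]
      _ = (eS (q.toFinset \ p.toFinset) + eS (q.toFinset ∩ p.toFinset)) +
            eS (p.toFinset \ q.toFinset) := by
          rw [ha, eS_singleton, Finset.inter_comm]
          abel
      _ = eS q.toFinset + eS (p.toFinset \ q.toFinset) := by
          rw [← eS_union hd1, hQdec]
  rw [prod_map_X_nodup hpnodup,
    show (X a : MvPolynomial V K) = monomial (Finsupp.single a 1) 1 from rfl,
    monomial_mul, one_mul, hid, ← one_mul (1 : K), ← monomial_mul]
  apply Ideal.mul_mem_right
  apply Ideal.subset_span
  refine ⟨q, hq, hqlen, ?_, (prod_map_X_nodup hqnodup).symm⟩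
  intro v hv
  simp only [Set.mem_compl_iff, Set.mem_singleton_iff]
  intro hvx
  exact hxq (hvx ▸ hv)

end AuxAlg
set_option maxHeartbeats 1000000 in
/-- Suppose `Δ_t(Γ)` is properly-connected, `w = x_{i_1} ⋯ x_{i_t}` is a
generator of `I_t(Γ)` with `x_{i_t}` a leaf of `Γ`, `F = {x_{i_1}, …, x_{i_t}}`,
`Y = ⋃ {G \ F : G a facet of Δ_t(Γ), |G ∩ F| = t - 1}` and `Z = Y ∪ F`. Then, with
`Γ' = Γ \ {x_{i_t}}` and `Γ'' = Γ \ Z`, we have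
`I_t(Γ') ∩ (w) = w(y_1, …, y_a) + w I_t(Γ'')`. -/
theorem pathIdeal_intersection_formula
    (V : Type) [Fintype V] [DecidableEq V] (G : SimpleGraph V) (hG : G.IsTree) (root : V)
    (K : Type) [Field K] (t : ℕ) (ht : 2 ≤ t)
    (hPC : ProperlyConnected (pathFacets G root t) (t - 1))
    (p : List V) (hp : IsDirPath G root p) (hlen : p.length = t)
    (xit : V) (hxit : p.getLast? = some xit) (hleaf : graphLeaf G xit)
    (w : MvPolynomial V K) (hw : w = (p.map X).prod)
    (Y : Set V)
    (hY : Y = {y | ∃ G' ∈ pathFacets G root t,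
      (G' ∩ p.toFinset).card = t - 1 ∧ y ∈ G' \ p.toFinset})
    (Z : Set V) (hZ : Z = Y ∪ ↑p.toFinset) :
    pathIdealOn G root K ({xit}ᶜ : Set V) t ⊓ Ideal.span {w} =
      Ideal.span {w} * Ideal.span (X '' Y) +
        Ideal.span {w} * pathIdealOn G root K Zᶜ t := by
  classical
  subst hw hY hZ
  have hpne : p ≠ [] := by intro h; rw [h] at hlen; simp at hlen; omega
  have hxitd : p.getD (t - 1) root = xit := by
    rw [List.getLast?_eq_getLast hpne, Option.some_inj] at hxit
    rw [← hxit, List.getD_eq_getElem _ _ (by omega : t - 1 < p.length),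
      List.getLast_eq_getElem]
    simp only [hlen]
  have hxitF : xit ∈ p.toFinset :=
    List.mem_toFinset.mpr ((mem_iff_getD (root := root)).mpr ⟨t - 1, by omega, hxitd⟩)
  have hpnodup := dirPath_nodup_s6 hp
  have hwm : (p.map X).prod = monomial (eS p.toFinset) (1 : K) := prod_map_X_nodup hpnodup
  set Y := {y | ∃ G' ∈ pathFacets G root t,
      (G' ∩ p.toFinset).card = t - 1 ∧ y ∈ G' \ p.toFinset} with hYdef
  have hYnF : ∀ y ∈ Y, y ∉ p.toFinset := by
    rintro y ⟨G', _, _, hyG⟩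
    exact (Finset.mem_sdiff.mp hyG).2
  apply le_antisymm
  · -- hard direction
    intro f hf
    rw [Submodule.mem_inf] at hf
    obtain ⟨hf1, hf2⟩ := hf
    obtain ⟨g, hg⟩ := Ideal.mem_span_singleton'.mp hf2
    have hgmem : g ∈ Ideal.span (X '' Y) ⊔ pathIdealOn G root K (Y ∪ ↑p.toFinset)ᶜ t := by
      have hJ : Ideal.span (X '' Y) ⊔ pathIdealOn G root K (Y ∪ ↑p.toFinset)ᶜ t =
          Ideal.span ((fun d => monomial d (1 : K)) ''
            (((fun y => Finsupp.single y 1) '' Y) ∪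
              {d | ∃ q : List V, IsDirPath G root q ∧ q.length = t ∧
                (∀ v ∈ q, v ∈ ((Y ∪ ↑p.toFinset)ᶜ : Set V)) ∧ d = eS q.toFinset})) := by
        rw [Set.image_union, Ideal.span_union, pathIdealOn_eq, Set.image_image]
        rfl
      rw [hJ, mem_ideal_span_monomial_image]
      intro d hd
      have hfs : eS p.toFinset + d ∈ f.support := by
        rw [MvPolynomial.mem_support_iff, ← hg, mul_comm, hwm,
          MvPolynomial.coeff_monomial_mul, one_mul]
        exact MvPolynomial.mem_support_iff.mp hd
      rw [pathIdealOn_eq, mem_ideal_span_monomial_image] at hf1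
      obtain ⟨dq, ⟨qq, hq1, hq2, hq3, rfl⟩, hle⟩ := hf1 _ hfs
      have hkey : ∀ v ∈ qq, v ∉ p.toFinset → 1 ≤ d v := by
        intro v hv hvF
        have h1 := Finsupp.le_def.mp hle v
        rw [Finsupp.add_apply, eS_apply, eS_apply, if_pos (List.mem_toFinset.mpr hv),
          if_neg hvF] at h1
        omega
      by_cases hex : ∃ y ∈ qq, y ∈ Y
      · obtain ⟨y, hyq, hyY⟩ := hex
        exact ⟨Finsupp.single y 1, Or.inl ⟨y, hyY, rfl⟩,
          Finsupp.single_le_iff.mpr (hkey y hyq (hYnF y hyY))⟩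
      · have hxq : xit ∉ qq := by
          intro hmem
          have := hq3 xit hmem
          simp at this
        have hqF : ∀ v ∈ qq, v ∉ p.toFinset := by
          intro v hv hvF
          obtain ⟨y, hyY, hyq⟩ := exists_Y_vertex hG ht hPC hp hlen hxitd hleaf hq1 hq2 hxq
            ⟨v, hv, List.mem_toFinset.mp hvF⟩
          exact hex ⟨y, hyq, hyY⟩
        refine ⟨eS qq.toFinset, Or.inr ⟨qq, hq1, hq2, ?_, rfl⟩, eS_le_iff.mpr ?_⟩
        · intro v hv
          simp only [Set.mem_compl_iff, Set.mem_union, not_or, Finset.coe_sort_coe,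
            Finset.mem_coe]
          exact ⟨fun h => hex ⟨v, hv, h⟩, fun h => hqF v hv h⟩
        · intro v hv
          exact hkey v (List.mem_toFinset.mp hv) (hqF v (List.mem_toFinset.mp hv))
    have hfin : f ∈ Ideal.span {(p.map X).prod} *
        (Ideal.span (X '' Y) ⊔ pathIdealOn G root K (Y ∪ ↑p.toFinset)ᶜ t) := by
      rw [← hg, mul_comm g]
      exact Ideal.mul_mem_mul (Ideal.mem_span_singleton_self _) hgmem
    rw [Submodule.add_eq_sup, ← Ideal.mul_sup]
    exact hfin
  · -- easy direction
    rw [Submodule.add_eq_sup]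
    apply sup_le
    · apply le_inf
      · rw [Ideal.span_mul_span', Ideal.span_le]
        rintro z hz
        rw [Set.mem_mul] at hz
        obtain ⟨w', hw', x, hx, rfl⟩ := hz
        rw [Set.mem_singleton_iff] at hw'
        subst hw'
        obtain ⟨y, hyY, rfl⟩ := hx
        exact wXy_mem hG ht hp hlen hxitd hleaf hyY
      · exact Ideal.mul_le_left
    · apply le_inf
      · refine le_trans Ideal.mul_le_right (pathIdealOn_mono ?_ t)
        intro v hv
        simp only [Set.mem_compl_iff, Set.mem_union, not_or] at hv
        simp only [Set.mem_compl_iff, Set.mem_singleton_iff]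
        intro h
        exact hv.2 (h ▸ (Finset.mem_coe.mpr hxitF))
      · exact Ideal.mul_le_left
end

section
/- Let n = 4k with k ≥ 1, let R = k[x_1,…,x_n] over a field, and let q_0 = x_2x_3x_4, q_i = x_{2i−1}x_{2i}x_{2i+1} + x_{2i+2}x_{2i+3}x_{2i+4} for i = 1,…,2k−2, and q_{2k−1} = x_{4k−3}x_{4k−2}x_{4k−1}. Then √(q_0, q_1, …, q_{2k−1}) = √(I_3(L_n)); in particular ara(I_3(L_{4k})) ≤ 2k. -/
open MvPolynomial CategoryTheory

/-- The projective dimension (in `ℕ∞`) of an `R`-module `M`: the least `n` such that `M`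
admits a projective resolution vanishing in homological degrees `> n`. -/
noncomputable def projDimN (R : Type) [CommRing R] (M : Type) [AddCommGroup M] [Module R M] : ℕ∞ :=
  sInf {n : ℕ∞ | ∃ P : ProjectiveResolution (ModuleCat.of R M),
    ∀ i : ℕ, n < (i : ℕ∞) → Limits.IsZero (P.complex.X i)}

/-- The arithmetical rank of an ideal `I`: the least number of elements generating `I`
up to radical. -/
noncomputable def araI {R : Type} [CommRing R] (I : Ideal R) : ℕ :=
  sInf {s : ℕ | ∃ f : Fin s → R, Ideal.radical (Ideal.span (Set.range f)) = Ideal.radical I}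

open Classical in
/-- The projective dimension of an ideal, with the convention `pd (0) = -1`. -/
noncomputable def pdIdealZ {R : Type} [CommRing R] (I : Ideal R) : WithTop ℤ :=
  if I = ⊥ then -1 else (projDimN R I).map (fun n : ℕ => (n : ℤ))

section Line

variable (K : Type) [Field K]

/-- The monomial `x_{i+1} x_{i+2} ⋯ x_{i+t}` (on `0`-indexed variables, the product
`X i ⋯ X (i+t-1)`), corresponding to a directed path of length `t` in the line graph
`L_n`. -/
noncomputable def lineMon (n t i : ℕ) (h : i + t ≤ n) : MvPolynomial (Fin n) K :=
  ∏ j : Fin t, X (⟨i + j, by omega⟩ : Fin n)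

/-- The set of minimal monomial generators of the path ideal `I_t(L_n)`. -/
def lineGens (n t : ℕ) : Set (MvPolynomial (Fin n) K) :=
  {m | ∃ (i : ℕ) (h : i + t ≤ n), m = lineMon K n t i h}

/-- The path ideal `I_t(L_n)` of the line graph `L_n`. -/
noncomputable def linePathIdeal (n t : ℕ) : Ideal (MvPolynomial (Fin n) K) :=
  Ideal.span (lineGens K n t)

/-- A good partition `P_0, …, P_r` of the generators of `I_t(L_n)`: a partition of
`G(I_t(L_n))` with `r + 1 = pd(R/I_t(L_n))`, such that `P_0` is a singleton and any two
distinct elements `p, p'` of a part `P_i` with `0 < i ≤ r` admit an element of an earlier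
part `P_{i'}`, `i' < i`, dividing `p * p'`. -/
def IsGoodPartition (n t : ℕ) (r : ℕ) (P : ℕ → Set (MvPolynomial (Fin n) K)) : Prop :=
  ((r : ℕ∞) + 1 =
      projDimN (MvPolynomial (Fin n) K) (MvPolynomial (Fin n) K ⧸ linePathIdeal K n t)) ∧
  (∀ i ≤ r, ∀ j ≤ r, i ≠ j → Disjoint (P i) (P j)) ∧
  (⋃ i ≤ r, P i) = lineGens K n t ∧
  (∃ p, P 0 = {p}) ∧
  (∀ i, 0 < i → i ≤ r → ∀ p ∈ P i, ∀ p' ∈ P i, p ≠ p' →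
    ∃ i' < i, ∃ q ∈ P i', q ∣ p * p')

end Line

section Helpers

lemma lineMon_three (K : Type) [Field K] (n a : ℕ) (h : a + 3 ≤ n) :
    lineMon K n 3 a h =
      X (⟨a, by omega⟩ : Fin n) * X ⟨a+1, by omega⟩ * X ⟨a+2, by omega⟩ := by
  simp [lineMon, Fin.prod_univ_three]

lemma lineMon_congr (K : Type) [Field K] (n t : ℕ) {a b : ℕ} (hab : a = b) (h : a + t ≤ n) :
    lineMon K n t a h = lineMon K n t b (hab ▸ h) := by subst hab; rfl

lemma lineMon_prod (K : Type) [Field K] (n a : ℕ) (h : a + 6 ≤ n) :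
    lineMon K n 3 a (by omega) * lineMon K n 3 (a+3) (by omega) =
      (X (⟨a, by omega⟩ : Fin n) * X ⟨a+4, by omega⟩ * X ⟨a+5, by omega⟩) *
        lineMon K n 3 (a+1) (by omega) := by
  rw [lineMon_three, lineMon_three, lineMon_three]
  simp only [show a+3+1 = a+4 by omega, show a+3+2 = a+5 by omega,
      show a+1+1 = a+2 by omega, show a+1+2 = a+3 by omega]
  ring

lemma mem_radical_of_add_mul {R : Type*} [CommRing R] {J : Ideal R} {p q : R}
    (h1 : p + q ∈ J.radical) (h2 : p * q ∈ J.radical) :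
    p ∈ J.radical ∧ q ∈ J.radical := by
  have key : ∀ x y : R, x + y ∈ J.radical → x * y ∈ J.radical → x ∈ J.radical := by
    intro x y hxy hm
    have hx2 : x ^ 2 ∈ J.radical := by
      have : x * (x + y) - x * y ∈ J.radical :=
        Ideal.sub_mem _ (Ideal.mul_mem_left _ _ hxy) hm
      have e : x * (x + y) - x * y = x ^ 2 := by ring
      rwa [e] at this
    exact Ideal.mem_radical_of_pow_mem hx2
  exact ⟨key p q h1 h2, key q p (by rwa [add_comm]) (by rwa [mul_comm])⟩

noncomputable def qFun (K : Type) [Field K] (k : ℕ) (hk : 1 ≤ k) :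
    Fin (2*k) → MvPolynomial (Fin (4*k)) K :=
  fun j => if j.val = 0 then lineMon K (4*k) 3 1 (by have := hk; omega)
  else if h : j.val ≤ 2*k-2 then
    lineMon K (4*k) 3 (2*j.val-2) (by have := hk; omega) + lineMon K (4*k) 3 (2*j.val+1) (by have := hk; omega)
  else lineMon K (4*k) 3 (4*k-4) (by have := hk; omega)

lemma range_qFun (K : Type) [Field K] (k : ℕ) (hk : 1 ≤ k)
    (Q : Set (MvPolynomial (Fin (4 * k)) K))
    (hQ : Q = {q | q = lineMon K (4 * k) 3 1 (by have := hk; omega) ∨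
      (∃ i, ∃ _ : 1 ≤ i, ∃ _ : i ≤ 2 * k - 2,
        q = lineMon K (4 * k) 3 (2 * i - 2) (by have := hk; omega) +
          lineMon K (4 * k) 3 (2 * i + 1) (by have := hk; omega)) ∨
      q = lineMon K (4 * k) 3 (4 * k - 4) (by have := hk; omega)}) :
    Set.range (qFun K k hk) = Q := by
  rw [hQ]
  ext q
  simp only [Set.mem_range, Set.mem_setOf_eq]
  constructor
  · rintro ⟨j, rfl⟩
    unfold qFun
    by_cases h0 : j.val = 0
    · rw [if_pos h0]; exact Or.inl rfl
    · rw [if_neg h0]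
      by_cases h1 : j.val ≤ 2*k-2
      · rw [dif_pos h1]; exact Or.inr (Or.inl ⟨j.val, by omega, h1, rfl⟩)
      · rw [dif_neg h1]; exact Or.inr (Or.inr rfl)
  · rintro (rfl | ⟨i, h1, h2, rfl⟩ | rfl)
    · exact ⟨⟨0, by omega⟩, by rw [qFun, if_pos rfl]⟩
    · refine ⟨⟨i, by omega⟩, ?_⟩
      rw [qFun, if_neg (by simpa using by omega : ¬ (⟨i, by omega⟩ : Fin (2*k)).val = 0),
        dif_pos (show (⟨i, by omega⟩ : Fin (2*k)).val ≤ 2*k-2 from h2)]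
    · refine ⟨⟨2*k-1, by omega⟩, ?_⟩
      rw [qFun, if_neg (show ¬ (⟨2*k-1, by omega⟩ : Fin (2*k)).val = 0 by simp; omega),
        dif_neg (show ¬ (⟨2*k-1, by omega⟩ : Fin (2*k)).val ≤ 2*k-2 by simp; omega)]

end Helpers

/-- Let `n = 4k` with `k ≥ 1` and let `q_0 = x₂x₃x₄`,
`q_i = x_{2i-1}x_{2i}x_{2i+1} + x_{2i+2}x_{2i+3}x_{2i+4}` for `i = 1, …, 2k-2`, and
`q_{2k-1} = x_{4k-3}x_{4k-2}x_{4k-1}`. Then `√(q_0, …, q_{2k-1}) = √(I_3(L_n))`; in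
particular `ara(I_3(L_{4k})) ≤ 2k`. (Here `x_j` is the `0`-indexed variable `X (j-1)`, and
`x_j x_{j+1} x_{j+2} = lineMon K (4k) 3 (j-1) _`.) -/
theorem sqrt_span_eq_sqrt_line_pathIdeal_three
    (k : ℕ) (hk : 1 ≤ k) (K : Type) [Field K]
    (Q : Set (MvPolynomial (Fin (4 * k)) K))
    (hQ : Q = {q | q = lineMon K (4 * k) 3 1 (by omega) ∨
      (∃ i, ∃ _ : 1 ≤ i, ∃ _ : i ≤ 2 * k - 2,
        q = lineMon K (4 * k) 3 (2 * i - 2) (by omega) +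
          lineMon K (4 * k) 3 (2 * i + 1) (by omega)) ∨
      q = lineMon K (4 * k) 3 (4 * k - 4) (by omega)}) :
    Ideal.radical (Ideal.span Q) = Ideal.radical (linePathIdeal K (4 * k) 3) ∧
      araI (linePathIdeal K (4 * k) 3) ≤ 2 * k := by
  have hQmem : ∀ q ∈ Q, q ∈ (Ideal.span Q).radical :=
    fun q hq => Ideal.le_radical (Ideal.subset_span hq)
  have hq0 : lineMon K (4*k) 3 1 (by omega) ∈ Q := by rw [hQ]; exact Or.inl rfl
  have hqlast : lineMon K (4*k) 3 (4*k-4) (by omega) ∈ Q := by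
    rw [hQ]; exact Or.inr (Or.inr rfl)
  have hqmid : ∀ i (h1 : 1 ≤ i) (h2 : i ≤ 2*k-2),
      lineMon K (4*k) 3 (2*i-2) (by omega) + lineMon K (4*k) 3 (2*i+1) (by omega) ∈ Q := by
    intro i h1 h2; rw [hQ]; exact Or.inr (Or.inl ⟨i, h1, h2, rfl⟩)
  -- main induction
  have main : ∀ i (hi : i ≤ 2*k-2),
      lineMon K (4*k) 3 (2*i+1) (by omega) ∈ (Ideal.span Q).radical ∧
      (1 ≤ i → lineMon K (4*k) 3 (2*i-2) (by omega) ∈ (Ideal.span Q).radical) := by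
    intro i
    induction i with
    | zero =>
      intro _
      refine ⟨?_, by omega⟩
      rw [lineMon_congr K (4*k) 3 (show 2*0+1 = 1 by omega)]
      exact hQmem _ hq0
    | succ i ih =>
      intro hi
      have prev : lineMon K (4*k) 3 (2*i+1) (by omega) ∈ (Ideal.span Q).radical :=
        (ih (by omega)).1
      have hsum : lineMon K (4*k) 3 (2*i) (by omega) + lineMon K (4*k) 3 (2*i+3) (by omega)
          ∈ (Ideal.span Q).radical := by
        have h := hQmem _ (hqmid (i+1) (by omega) (by omega))
        rwa [lineMon_congr K (4*k) 3 (show 2*(i+1)-2 = 2*i by omega),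
             lineMon_congr K (4*k) 3 (show 2*(i+1)+1 = 2*i+3 by omega)] at h
      have hprod : lineMon K (4*k) 3 (2*i) (by omega) * lineMon K (4*k) 3 (2*i+3) (by omega)
          ∈ (Ideal.span Q).radical := by
        rw [lineMon_prod K (4*k) (2*i) (by omega)]
        exact Ideal.mul_mem_left _ _ prev
      obtain ⟨he, ho⟩ := mem_radical_of_add_mul hsum hprod
      constructor
      · rw [lineMon_congr K (4*k) 3 (show 2*(i+1)+1 = 2*i+3 by omega)]; exact ho
      · intro _
        rw [lineMon_congr K (4*k) 3 (show 2*(i+1)-2 = 2*i by omega)]; exact he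
  -- all generators lie in the radical
  have gens : ∀ a (ha : a + 3 ≤ 4*k), lineMon K (4*k) 3 a ha ∈ (Ideal.span Q).radical := by
    intro a ha
    rcases Nat.even_or_odd a with ⟨b, hb⟩ | ⟨b, hb⟩
    · by_cases hlast : a = 4*k-4
      · rw [lineMon_congr K (4*k) 3 hlast]; exact hQmem _ hqlast
      · have h2 := (main (b+1) (by omega)).2 (by omega)
        rw [lineMon_congr K (4*k) 3 (show a = 2*(b+1)-2 by omega)]; exact h2
    · have h1 := (main b (by omega)).1
      rw [lineMon_congr K (4*k) 3 (show a = 2*b+1 by omega)]; exact h1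
  -- span Q ≤ path ideal
  have hQsub : Ideal.span Q ≤ linePathIdeal K (4*k) 3 := by
    rw [Ideal.span_le]
    intro q hq
    rw [hQ] at hq
    have hg : ∀ a (ha : a+3 ≤ 4*k), lineMon K (4*k) 3 a ha ∈ linePathIdeal K (4*k) 3 :=
      fun a ha => Ideal.subset_span ⟨a, ha, rfl⟩
    rcases hq with h | ⟨i, h1, h2, h⟩ | h
    · exact h ▸ hg 1 (by omega)
    · exact h ▸ Ideal.add_mem _ (hg (2*i-2) (by omega)) (hg (2*i+1) (by omega))
    · exact h ▸ hg (4*k-4) (by omega)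
  have hle1 : Ideal.radical (Ideal.span Q) ≤ Ideal.radical (linePathIdeal K (4*k) 3) :=
    Ideal.radical_mono hQsub
  have hle2 : Ideal.radical (linePathIdeal K (4*k) 3) ≤ Ideal.radical (Ideal.span Q) := by
    have hle : linePathIdeal K (4*k) 3 ≤ (Ideal.span Q).radical := by
      rw [linePathIdeal, Ideal.span_le]
      rintro m ⟨a, ha, rfl⟩
      exact gens a ha
    calc Ideal.radical (linePathIdeal K (4*k) 3)
        ≤ Ideal.radical ((Ideal.span Q).radical) := Ideal.radical_mono hle
      _ = (Ideal.span Q).radical := Ideal.radical_idem _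
  have heq : Ideal.radical (Ideal.span Q) = Ideal.radical (linePathIdeal K (4*k) 3) :=
    le_antisymm hle1 hle2
  refine ⟨heq, Nat.sInf_le ⟨qFun K k hk, ?_⟩⟩
  have hr : Set.range (qFun K k hk) = Q := range_qFun K k hk Q hQ
  rw [hr, heq]
end

section
/- Fix n ≥ t ≥ 2, a field k, and let m_i = x_i x_{i+1} ⋯ x_{i+t−1} so that I_t(L_n) = (m_1,…,m_{n−t+1}). If P_0,…,P_r is a good partition of I_t(L_n) and m_i, m_j ∈ P_ℓ with i < j, then i + 1 < j ≤ i + t. -/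
open MvPolynomial CategoryTheory

noncomputable def lineSupp (n t i : ℕ) (h : i + t ≤ n) : Fin n →₀ ℕ :=
  ∑ j : Fin t, Finsupp.single (⟨i + j, by omega⟩ : Fin n) 1

lemma lineSupp_apply (n t i : ℕ) (h : i + t ≤ n) (v : Fin n) :
    lineSupp n t i h v = if i ≤ v.val ∧ v.val < i + t then 1 else 0 := by
  classical
  rw [lineSupp, Finsupp.finset_sum_apply]
  simp only [Finsupp.single_apply]
  by_cases hc : i ≤ v.val ∧ v.val < i + t
  · have hj0 : v.val - i < t := by omega
    rw [Finset.sum_eq_single (⟨v.val - i, hj0⟩ : Fin t)]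
    · rw [if_pos]; · rw [if_pos hc]
      apply Fin.ext; simp; omega
    · intro b _ hb
      rw [if_neg]
      intro hcon
      apply hb; apply Fin.ext
      have := congrArg Fin.val hcon
      simp at this ⊢; omega
    · intro hcon; exact absurd (Finset.mem_univ _) hcon
  · rw [if_neg hc, Finset.sum_eq_zero]
    intro b _
    rw [if_neg]
    intro hcon
    have := congrArg Fin.val hcon
    simp at this
    omega

lemma lineMon_eq (K : Type) [Field K] (n t i : ℕ) (h : i + t ≤ n) :
    lineMon K n t i h = monomial (lineSupp n t i h) 1 := by
  rw [lineSupp, monomial_sum_one]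
  simp [lineMon, X]


/-- If `P_0, …, P_r` is a good partition of `I_t(L_n)` (with `n ≥ t ≥ 2`)
and the generators `m_i`, `m_j` (here `0`-indexed: `m_i = x_{i+1} ⋯ x_{i+t}`) both lie in a
part `P_ℓ` with `i < j`, then `i + 1 < j ≤ i + t`. -/
theorem goodPartition_spacing
    (n t : ℕ) (ht : 2 ≤ t) (htn : t ≤ n) (K : Type) [Field K]
    (r : ℕ) (P : ℕ → Set (MvPolynomial (Fin n) K)) (hP : IsGoodPartition K n t r P)
    (ℓ : ℕ) (hℓ : ℓ ≤ r) (i j : ℕ) (hi : i + t ≤ n) (hj : j + t ≤ n) (hij : i < j)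
    (hmi : lineMon K n t i hi ∈ P ℓ) (hmj : lineMon K n t j hj ∈ P ℓ) :
    i + 1 < j ∧ j ≤ i + t := by
  obtain ⟨hpd, hdisj, hunion, ⟨p0, hp0⟩, hgood⟩ := hP
  have hne : lineMon K n t i hi ≠ lineMon K n t j hj := by
    intro h
    rw [lineMon_eq, lineMon_eq] at h
    have hs : lineSupp n t i hi = lineSupp n t j hj :=
      (MvPolynomial.monomial_left_injective (one_ne_zero : (1:K) ≠ 0)) h
    have := congrFun (congrArg DFunLike.coe hs) (⟨i, by omega⟩ : Fin n)
    rw [lineSupp_apply, lineSupp_apply] at this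
    simp only [if_pos (show i ≤ i ∧ i < i + t by omega)] at this
    split_ifs at this with hcond
    all_goals omega
  have hℓ0 : 0 < ℓ := by
    rcases Nat.eq_zero_or_pos ℓ with rfl | h
    · exact absurd (hp0 ▸ hmi : _ ∈ ({p0} : Set _)) (by
        have := hp0 ▸ hmj
        simp only [Set.mem_singleton_iff] at this ⊢
        intro h'
        exact hne (h'.trans this.symm))
    · exact h
  obtain ⟨i', hi'lt, q, hq, hdvd⟩ := hgood ℓ hℓ0 hℓ _ hmi _ hmj hne
  have hi'r : i' ≤ r := le_trans (le_of_lt hi'lt) hℓ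
  have hqg : q ∈ lineGens K n t := by
    rw [← hunion]
    exact Set.mem_biUnion hi'r hq
  obtain ⟨k, hk, rfl⟩ := hqg
  have hqnot : lineMon K n t k hk ∉ P ℓ :=
    Set.disjoint_left.mp (hdisj i' hi'r ℓ hℓ (Nat.ne_of_lt hi'lt)) hq
  have hki : k ≠ i := by rintro rfl; exact hqnot hmi
  have hkj : k ≠ j := by rintro rfl; exact hqnot hmj
  rw [lineMon_eq, lineMon_eq, lineMon_eq, MvPolynomial.monomial_mul,
    MvPolynomial.monomial_dvd_monomial] at hdvd
  obtain ⟨h1, -⟩ := hdvd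
  have hle : lineSupp n t k hk ≤ lineSupp n t i hi + lineSupp n t j hj := by
    rcases h1 with h | h
    · exact absurd h (by simp)
    · exact h
  have F : ∀ v : ℕ, v < n → (k ≤ v ∧ v < k + t) →
      (i ≤ v ∧ v < i + t) ∨ (j ≤ v ∧ v < j + t) := by
    intro v hv hvk
    have hfe := Finsupp.le_def.mp hle (⟨v, hv⟩ : Fin n)
    rw [Finsupp.add_apply, lineSupp_apply, lineSupp_apply, lineSupp_apply] at hfe
    simp only [if_pos hvk] at hfe
    by_contra hcon
    push_neg at hcon
    rw [if_neg (by omega), if_neg (by omega)] at hfe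
    omega
  have Fk := F k (by omega) ⟨le_refl _, by omega⟩
  have Fk2 := F (k + t - 1) (by omega) ⟨by omega, by omega⟩
  constructor
  · by_contra hcon
    have hji : j = i + 1 := by omega
    have : k = i ∨ k = j := by omega
    rcases this with rfl | rfl
    · exact hki rfl
    · exact hkj rfl
  · by_contra hcon
    push_neg at hcon
    rcases Fk with hA | hB
    · have hik : i < k := by omega
      have Fm := F (i + t) (by omega) ⟨by omega, by omega⟩
      omega
    · have : k = j := by omega
      exact hkj this
end

section
/- Fix n ≥ t ≥ 2 and a field k. If P_0,…,P_r is a good partition of I_t(L_n), then |P_ℓ| ≤ ⌊t/2⌋ + 1 for all ℓ = 1,…,r. -/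
open MvPolynomial CategoryTheory

lemma eval_lineMon (K : Type) [Field K] (n t i v : ℕ) (h : i + t ≤ n) :
    eval (fun x : Fin n => if (x : ℕ) = v then (0:K) else 1) (lineMon K n t i h) =
      if i ≤ v ∧ v < i + t then 0 else 1 := by
  rw [lineMon, map_prod]
  simp only [eval_X]
  split_ifs with hcase
  · apply Finset.prod_eq_zero (i := (⟨v - i, by omega⟩ : Fin t)) (Finset.mem_univ _)
    rw [if_pos]
    show i + (v - i) = v
    omega
  · apply Finset.prod_eq_one
    intro j _
    rw [if_neg]
    show ¬ (i + (j:ℕ) = v)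
    intro hc
    exact hcase ⟨by omega, by omega⟩

lemma lineMon_dvd_cover (K : Type) [Field K] (n t : ℕ) (j a b : ℕ)
    (hj : j + t ≤ n) (ha : a + t ≤ n) (hb : b + t ≤ n)
    (hdvd : lineMon K n t j hj ∣ lineMon K n t a ha * lineMon K n t b hb)
    (v : ℕ) (h1 : j ≤ v) (h2 : v < j + t) :
    (a ≤ v ∧ v < a + t) ∨ (b ≤ v ∧ v < b + t) := by
  by_contra hcon
  push_neg at hcon
  obtain ⟨c, hc⟩ := hdvd
  have heq := congrArg (eval (fun x : Fin n => if (x:ℕ) = v then (0:K) else 1)) hc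
  rw [map_mul, map_mul, eval_lineMon, eval_lineMon, eval_lineMon] at heq
  rw [if_neg, if_neg, if_pos ⟨h1, h2⟩, zero_mul, one_mul] at heq
  · exact one_ne_zero heq
  · intro hx; exact absurd hx.2 (by have := hcon.2 hx.1; omega)
  · intro hx; exact absurd hx.2 (by have := hcon.1 hx.1; omega)

lemma lineMon_inj (K : Type) [Field K] (n t : ℕ) (ht : 1 ≤ t) (a b : ℕ)
    (ha : a + t ≤ n) (hb : b + t ≤ n)
    (hE : lineMon K n t a ha = lineMon K n t b hb) : a = b := by
  have h1 := lineMon_dvd_cover K n t a b b ha hb hb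
    ((dvd_of_eq hE).mul_right _) a le_rfl (by omega)
  have h2 := lineMon_dvd_cover K n t b a a hb ha ha
    ((dvd_of_eq hE.symm).mul_right _) b le_rfl (by omega)
  omega

/-- If `P_0, …, P_r` is a good partition of `I_t(L_n)` (with `n ≥ t ≥ 2`),
then `|P_ℓ| ≤ ⌊t/2⌋ + 1` for all `ℓ = 1, …, r`. -/
theorem goodPartition_part_card_le
    (n t : ℕ) (ht : 2 ≤ t) (htn : t ≤ n) (K : Type) [Field K]
    (r : ℕ) (P : ℕ → Set (MvPolynomial (Fin n) K)) (hP : IsGoodPartition K n t r P)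
    (ℓ : ℕ) (hℓ : 1 ≤ ℓ) (hℓr : ℓ ≤ r) :
    (P ℓ).ncard ≤ t / 2 + 1 := by
  obtain ⟨-, hdisj, hunion, -, hgood⟩ := hP
  set S : Set ℕ := {i | ∃ h : i + t ≤ n, lineMon K n t i h ∈ P ℓ} with hSdef
  have hSfin : S.Finite := by
    apply (Set.finite_Iio n).subset
    rintro i ⟨h, -⟩
    simp only [Set.mem_Iio]
    omega
  -- pairwise property of the index set
  have hpair : ∀ a ∈ S, ∀ b ∈ S, a < b → a + 2 ≤ b ∧ b ≤ a + t := by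
    rintro a ⟨ha, hpa⟩ b ⟨hb, hpb⟩ hab
    have hne : lineMon K n t a ha ≠ lineMon K n t b hb := fun e => by
      have := lineMon_inj K n t (by omega) a b ha hb e; omega
    obtain ⟨i', hi', q, hq, hdvd⟩ := hgood ℓ hℓ hℓr _ hpa _ hpb hne
    have hqgen : q ∈ lineGens K n t := by
      rw [← hunion]
      exact Set.mem_iUnion₂.mpr ⟨i', by omega, hq⟩
    obtain ⟨j, hjn, rfl⟩ := hqgen
    have hqnot : lineMon K n t j hjn ∉ P ℓ := fun hmem =>
      Set.disjoint_left.mp (hdisj i' (by omega) ℓ hℓr (by omega)) hq hmem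
    have hja : j ≠ a := by rintro rfl; exact hqnot hpa
    have hjb : j ≠ b := by rintro rfl; exact hqnot hpb
    have C := lineMon_dvd_cover K n t j a b hjn ha hb hdvd
    have F1 := C j le_rfl (by omega)
    have F2 := C (j + t - 1) (by omega) (by omega)
    constructor
    · omega
    · by_contra hbig
      have haj : a < j ∧ j < a + t := by omega
      have F3 := C (a + t) (by omega) (by omega)
      omega
  -- card of P ℓ ≤ card S
  have hsub : P ℓ ⊆ (fun i => if h : i + t ≤ n then lineMon K n t i h else 0) '' S := by
    intro p hp
    have hpg : p ∈ lineGens K n t := by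
      rw [← hunion]
      exact Set.mem_iUnion₂.mpr ⟨ℓ, hℓr, hp⟩
    obtain ⟨i, h, rfl⟩ := hpg
    exact ⟨i, ⟨h, hp⟩, dif_pos h⟩
  have h1 : (P ℓ).ncard ≤ S.ncard :=
    le_trans (Set.ncard_le_ncard hsub (hSfin.image _)) (Set.ncard_image_le hSfin)
  rcases S.eq_empty_or_nonempty with hSe | hSne
  · rw [hSe] at h1
    simp only [Set.ncard_empty] at h1
    omega
  · set m := sInf S with hm
    have hmS : m ∈ S := Nat.sInf_mem hSne
    have hmle : ∀ a ∈ S, m ≤ a := fun a ha => Nat.sInf_le ha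
    have hinj : Set.InjOn (fun a => (a - m) / 2) S := by
      intro a haS b hbS he
      simp only at he
      rcases lt_trichotomy a b with h | h | h
      · have h2 := hpair a haS b hbS h
        have h3 := hmle a haS
        omega
      · exact h
      · have h2 := hpair b hbS a haS h
        have h3 := hmle b hbS
        omega
    have hrange : (fun a => (a - m) / 2) '' S ⊆ Set.Iic (t / 2) := by
      rintro _ ⟨a, haS, rfl⟩
      simp only [Set.mem_Iic]
      rcases eq_or_lt_of_le (hmle a haS) with h | h
      · omega
      · have := (hpair m hmS a haS h).2
        omega
    have h2 : S.ncard ≤ t / 2 + 1 := by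
      rw [← Set.ncard_image_of_injOn hinj]
      calc ((fun a => (a - m) / 2) '' S).ncard
          ≤ (Set.Iic (t / 2)).ncard := Set.ncard_le_ncard hrange (Set.finite_Iic _)
        _ = t / 2 + 1 := by rw [← Finset.coe_Iic, Set.ncard_coe_finset, Nat.card_Iic]
    omega
end
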